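/- arXiv:1401.1922 — 8 statements merged into one kernel-verified Lean document; each statement's English description precedes it below -/
import Mathlib

section
/- Let 𝔤 be a quadratic Lie algebra with ad-invariant nondegenerate symmetric form (·,·), let ⟨·,·⟩ be an inner product on 𝔤, let θ be the unique linear endomorphism with (X,Y) = ⟨X, θ(Y)⟩ for all X, Y (θ is invertible and self-adjoint with respect to ⟨·,·⟩), and let ∇ be defined by the Koszul formula. Then for all X, Y ∈ 𝔤: ∇_X Y = (1/2)([X,Y] − θ[θ⁻¹X, Y] + θ[X, θ⁻¹Y]). -/
/-- On a quadratic Lie algebra with inner product `⟨·,·⟩`, letting `θ` be the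
invertible self-adjoint endomorphism with `(X,Y) = ⟨X, θ Y⟩`, the Koszul
connection is given by `∇_X Y = (1/2)([X,Y] − θ[θ⁻¹X, Y] + θ[X, θ⁻¹Y])`. -/
theorem koszul_connection_formula_on_quadratic_lie_algebra
    (L : Type) [LieRing L] [LieAlgebra ℝ L] [FiniteDimensional ℝ L]
    (B : L →ₗ[ℝ] L →ₗ[ℝ] ℝ)
    (hBsymm : ∀ u v : L, B u v = B v u)
    (hBnd : ∀ u : L, (∀ v : L, B u v = 0) → u = 0)
    (hBinv : ∀ X Y Z : L, B ⁅X, Y⁆ Z + B Y ⁅X, Z⁆ = 0)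
    (inn : L →ₗ[ℝ] L →ₗ[ℝ] ℝ)
    (hinnsymm : ∀ u v : L, inn u v = inn v u)
    (hinnpos : ∀ v : L, v ≠ 0 → 0 < inn v v)
    (θ : L ≃ₗ[ℝ] L)
    (hθ : ∀ u v : L, B u v = inn u (θ v))
    (hθsa : ∀ u v : L, inn (θ u) v = inn u (θ v))
    (nab : L →ₗ[ℝ] L →ₗ[ℝ] L)
    (hkoszul : ∀ U V W : L, inn (nab U V) W =
      (1/2) * (inn ⁅U, V⁆ W - inn ⁅V, W⁆ U + inn ⁅W, U⁆ V)) :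
    ∀ X Y : L, nab X Y =
      (1/2 : ℝ) • (⁅X, Y⁆ - θ ⁅θ.symm X, Y⁆ + θ ⁅X, θ.symm Y⁆) := by
  intro X Y
  have hinnnd : ∀ u : L, (∀ v : L, inn u v = 0) → u = 0 := by
    intro u h
    by_contra hu
    have hp := hinnpos u hu
    rw [h u] at hp
    exact lt_irrefl 0 hp
  set R := (1/2 : ℝ) • (⁅X, Y⁆ - θ ⁅θ.symm X, Y⁆ + θ ⁅X, θ.symm Y⁆) with hR
  have key : ∀ W, inn (nab X Y - R) W = 0 := by
    intro W
    have h1 : inn (θ ⁅θ.symm X, Y⁆) W = inn ⁅Y, W⁆ X := by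
      have e1 : inn (θ ⁅θ.symm X, Y⁆) W = B ⁅θ.symm X, Y⁆ W := by
        rw [hθsa, ← hθ]
      have e2 : inn ⁅Y, W⁆ X = B ⁅Y, W⁆ (θ.symm X) := by
        rw [hθ, θ.apply_symm_apply]
      have e3 := hBinv Y (θ.symm X) W
      have e4 : B ⁅θ.symm X, Y⁆ W = - B ⁅Y, θ.symm X⁆ W := by
        rw [← lie_skew, map_neg, LinearMap.neg_apply]
      have e5 : B ⁅Y, W⁆ (θ.symm X) = B (θ.symm X) ⁅Y, W⁆ := hBsymm _ _
      rw [e1, e2, e4, e5]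
      linarith
    have h2 : inn (θ ⁅X, θ.symm Y⁆) W = inn ⁅W, X⁆ Y := by
      have e1 : inn (θ ⁅X, θ.symm Y⁆) W = B ⁅X, θ.symm Y⁆ W := by
        rw [hθsa, ← hθ]
      have e2 : inn ⁅W, X⁆ Y = B ⁅W, X⁆ (θ.symm Y) := by
        rw [hθ, θ.apply_symm_apply]
      have e3 := hBinv X (θ.symm Y) W
      have e4 : B (θ.symm Y) ⁅X, W⁆ = - B (θ.symm Y) ⁅W, X⁆ := by
        rw [← lie_skew, map_neg]
      have e5 : B ⁅W, X⁆ (θ.symm Y) = B (θ.symm Y) ⁅W, X⁆ := hBsymm _ _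
      rw [e1, e2, e5]
      linarith
    have expand : inn R W = (1/2 : ℝ) * (inn ⁅X, Y⁆ W - inn ⁅Y, W⁆ X + inn ⁅W, X⁆ Y) := by
      rw [hR, map_smul, LinearMap.smul_apply, map_add, map_sub, LinearMap.add_apply,
        LinearMap.sub_apply, h1, h2, smul_eq_mul]
    rw [map_sub, LinearMap.sub_apply, hkoszul, expand]
    ring
  have : nab X Y - R = 0 := hinnnd _ key
  exact sub_eq_zero.mp this
end

section
/- Let 𝔤 be a quadratic Lie algebra with inner product ⟨·,·⟩, let {X_1,…,X_n} be a ⟨·,·⟩-orthonormal basis with (X_i,X_j) = λ_i δ_ij (λ_i ≠ 0), set μ_i = 1/λ_i, and let ∇ be defined by the Koszul formula. Then ∇_{X_i} X_j = (1/2) Σ_{l=1}^n ((μ_l − μ_i + μ_j)/μ_l) C_ij^l X_l for all i, j. -/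
/-- On a quadratic Lie algebra with inner product and orthonormal basis `X_i`
with `(X_i,X_j) = λ_i δ_ij`, `μ_i = 1/λ_i`, the Koszul connection satisfies
`∇_{X_i} X_j = (1/2) Σ_l ((μ_l − μ_i + μ_j)/μ_l) C_ij^l X_l`. -/
theorem koszul_connection_structure_constants_formula
    (L : Type) [LieRing L] [LieAlgebra ℝ L] [FiniteDimensional ℝ L]
    (B : L →ₗ[ℝ] L →ₗ[ℝ] ℝ)
    (hBsymm : ∀ u v : L, B u v = B v u)
    (hBnd : ∀ u : L, (∀ v : L, B u v = 0) → u = 0)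
    (hBinv : ∀ X Y Z : L, B ⁅X, Y⁆ Z + B Y ⁅X, Z⁆ = 0)
    (inn : L →ₗ[ℝ] L →ₗ[ℝ] ℝ)
    (hinnsymm : ∀ u v : L, inn u v = inn v u)
    (hinnpos : ∀ v : L, v ≠ 0 → 0 < inn v v)
    (nab : L →ₗ[ℝ] L →ₗ[ℝ] L)
    (hkoszul : ∀ U V W : L, inn (nab U V) W =
      (1/2) * (inn ⁅U, V⁆ W - inn ⁅V, W⁆ U + inn ⁅W, U⁆ V))
    (nn : ℕ) (b : Module.Basis (Fin nn) ℝ L)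
    (hortho : ∀ i j : Fin nn, inn (b i) (b j) = if i = j then 1 else 0)
    (lam : Fin nn → ℝ) (hlam : ∀ i, lam i ≠ 0)
    (hBval : ∀ i j : Fin nn, B (b i) (b j) = if i = j then lam i else 0)
    (μ : Fin nn → ℝ) (hμ : ∀ i, μ i = (lam i)⁻¹)
    (C : Fin nn → Fin nn → Fin nn → ℝ)
    (hC : ∀ i j : Fin nn, ⁅b i, b j⁆ = ∑ l, C i j l • b l) :
    ∀ i j : Fin nn,
      nab (b i) (b j) =
        ∑ l, ((1/2) * ((μ l - μ i + μ j) / μ l) * C i j l) • b l := by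

  intro i j
  -- inner product of brackets with basis gives structure constants
  have hbr : ∀ a c d : Fin nn, inn ⁅b a, b c⁆ (b d) = C a c d := by
    intro a c d
    rw [hC]
    rw [map_sum]
    simp only [LinearMap.sum_apply, map_smul, LinearMap.smul_apply, hortho, smul_eq_mul,
      mul_ite, mul_one, mul_zero]
    simp [Finset.sum_ite_eq']
  have hBbr : ∀ a c d : Fin nn, B ⁅b a, b c⁆ (b d) = C a c d * lam d := by
    intro a c d
    rw [hC, map_sum]
    simp only [LinearMap.sum_apply, map_smul, LinearMap.smul_apply, hBval, smul_eq_mul,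
      mul_ite, mul_zero]
    rw [Finset.sum_ite_eq' Finset.univ d]
    simp
  have hBbr2 : ∀ a c d : Fin nn, B (b a) ⁅b c, b d⁆ = C c d a * lam a := by
    intro a c d
    rw [hC, map_sum]
    simp only [map_smul, smul_eq_mul, hBval, mul_ite, mul_zero]
    rw [Finset.sum_ite_eq Finset.univ a]
    simp
  have key : ∀ a c d : Fin nn, lam d * C a c d = -(lam c * C a d c) := by
    intro a c d
    have h := hBinv (b a) (b c) (b d)
    rw [hBbr, hBbr2] at h
    linarith
  have antisym : ∀ a c d : Fin nn, C c a d = -C a c d := by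
    intro a c d
    have h1 : inn ⁅b c, b a⁆ (b d) = - inn ⁅b a, b c⁆ (b d) := by
      rw [← lie_skew (b a) (b c), map_neg]
      simp
    rw [hbr, hbr] at h1
    exact h1
  have h1 : ∀ k, lam i * C j k i = lam k * C i j k := by
    intro k
    have h := key j k i
    rw [antisym i j k] at h
    linarith
  have h2 : ∀ k, lam j * C k i j = lam k * C i j k := by
    intro k
    have h := key k i j
    have h' : C k j i = - C j k i := antisym j k i
    rw [h'] at h
    have := h1 k
    linarith
  -- representation lemma
  have hrep : ∀ u : L, u = ∑ k, inn u (b k) • b k := by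
    intro u
    have hcoef : ∀ k, inn u (b k) = b.repr u k := by
      intro k
      conv_lhs => rw [← b.sum_repr u]
      rw [map_sum]
      simp only [LinearMap.sum_apply, map_smul, LinearMap.smul_apply, hortho, smul_eq_mul,
        mul_ite, mul_one, mul_zero]
      simp [Finset.sum_ite_eq']
    conv_lhs => rw [← b.sum_repr u]
    exact Finset.sum_congr rfl (fun k _ => by rw [hcoef])
  rw [hrep (nab (b i) (b j))]
  refine Finset.sum_congr rfl (fun k _ => ?_)
  congr 1
  rw [hkoszul, hbr, hbr, hbr]
  have hk := h1 k
  have hk2 := h2 k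
  have hCj : C j k i = lam k / lam i * C i j k := by
    field_simp [hlam i]
    linarith
  have hCk : C k i j = lam k / lam j * C i j k := by
    field_simp [hlam j]
    linarith
  rw [hCj, hCk, hμ, hμ, hμ]
  have hi := hlam i
  have hj := hlam j
  have hkk := hlam k
  field_simp
end

section
/- Let 𝔤 be a quadratic Lie algebra with inner product ⟨·,·⟩, let ∇ be defined by the Koszul formula, and let Ric be the algebraically defined Ricci tensor. Then for all X, Y ∈ 𝔤: Ric(X,Y) = −tr((∇_X − ad X) ∘ (∇_Y − ad Y)), where ∇_X denotes the endomorphism W ↦ ∇_X W. -/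
open LinearMap Matrix

lemma trace_eq_zero_of_skew' {L : Type} [AddCommGroup L] [Module ℝ L] [FiniteDimensional ℝ L]
    (B : L →ₗ[ℝ] L →ₗ[ℝ] ℝ) (hnd : ∀ u : L, (∀ v : L, B u v = 0) → u = 0)
    (A : L →ₗ[ℝ] L) (hskew : ∀ u v : L, B (A u) v = - B u (A v)) :
    LinearMap.trace ℝ L A = 0 := by
  let b := Module.finBasis ℝ L
  let G := LinearMap.toMatrix₂ b b B
  let M := LinearMap.toMatrix b b A
  have hndB : LinearMap.BilinForm.Nondegenerate B := LinearMap.BilinForm.Nondegenerate.ofSeparatingLeft hnd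
  have hdet : IsUnit G.det := isUnit_iff_ne_zero.mpr ((LinearMap.BilinForm.nondegenerate_iff_det_ne_zero b).mp hndB)
  have hop : B.compl₁₂ A LinearMap.id = - B.compl₁₂ LinearMap.id A := by
    ext u v
    simp [LinearMap.compl₁₂_apply, hskew u v]
  have key : Mᵀ * G = -(G * M) := by
    have h1 := LinearMap.toMatrix₂_compl₁₂ b b b b B A (LinearMap.id)
    have h2 := LinearMap.toMatrix₂_compl₁₂ b b b b B (LinearMap.id) A
    have e : (LinearMap.toMatrix₂ b b) (B.compl₁₂ A LinearMap.id)
        = -((LinearMap.toMatrix₂ b b) (B.compl₁₂ LinearMap.id A)) := by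
      rw [hop, ← neg_one_smul ℝ (B.compl₁₂ LinearMap.id A), map_smul, neg_one_smul]
    rw [e, h2] at h1
    simp only [LinearMap.toMatrix_id, Matrix.transpose_one, Matrix.one_mul,
      Matrix.mul_one] at h1
    simpa [M, G] using h1.symm
  have hMG : G * M = -(Mᵀ * G) := by rw [key, neg_neg]
  have hMeq : M = -(G⁻¹ * (Mᵀ * G)) := by
    have := congrArg (fun N => G⁻¹ * N) hMG
    simpa [Matrix.nonsing_inv_mul_cancel_left G M hdet, Matrix.mul_neg] using this
  have htr : M.trace = - M.trace := by
    calc M.trace = (-(G⁻¹ * (Mᵀ * G))).trace := by rw [← hMeq]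
    _ = -((G⁻¹ * (Mᵀ * G)).trace) := by rw [Matrix.trace_neg]
    _ = -((Mᵀ * G * G⁻¹).trace) := by rw [Matrix.trace_mul_comm, Matrix.mul_assoc]
    _ = -(Mᵀ.trace) := by rw [Matrix.mul_nonsing_inv_cancel_right _ _ hdet]
    _ = - M.trace := by rw [Matrix.trace_transpose]
  have : M.trace = 0 := by linarith
  rw [LinearMap.trace_eq_matrix_trace ℝ b A]
  exact this


/-- On a quadratic Lie algebra with inner product and Koszul connection `∇`,
the algebraic Ricci tensor satisfies
`Ric(X,Y) = −tr((∇_X − ad X) ∘ (∇_Y − ad Y))`. -/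
theorem ricci_trace_formula_quadratic
    (L : Type) [LieRing L] [LieAlgebra ℝ L] [FiniteDimensional ℝ L]
    (B : L →ₗ[ℝ] L →ₗ[ℝ] ℝ)
    (hBsymm : ∀ u v : L, B u v = B v u)
    (hBnd : ∀ u : L, (∀ v : L, B u v = 0) → u = 0)
    (hBinv : ∀ X Y Z : L, B ⁅X, Y⁆ Z + B Y ⁅X, Z⁆ = 0)
    (inn : L →ₗ[ℝ] L →ₗ[ℝ] ℝ)
    (hinnsymm : ∀ u v : L, inn u v = inn v u)
    (hinnpos : ∀ v : L, v ≠ 0 → 0 < inn v v)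
    (nab : L →ₗ[ℝ] L →ₗ[ℝ] L)
    (hkoszul : ∀ U V W : L, inn (nab U V) W =
      (1/2) * (inn ⁅U, V⁆ W - inn ⁅V, W⁆ U + inn ⁅W, U⁆ V))
    (Ric : L → L → ℝ)
    -- `Ric(X,Y) = tr(W ↦ ∇_W(∇_X Y) − ∇_X(∇_W Y) − ∇_{[W,X]} Y)`
    (hRic : ∀ U V : L, Ric U V = LinearMap.trace ℝ L
      (nab.flip (nab U V) - nab U ∘ₗ nab.flip V
        + nab.flip V ∘ₗ (LieAlgebra.ad ℝ L U : L →ₗ[ℝ] L))) :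
    ∀ X Y : L, Ric X Y =
      - LinearMap.trace ℝ L
        ((nab X - (LieAlgebra.ad ℝ L X : L →ₗ[ℝ] L))
          ∘ₗ (nab Y - (LieAlgebra.ad ℝ L Y : L →ₗ[ℝ] L))) := by
  have hinnnd : ∀ u : L, (∀ v : L, inn u v = 0) → u = 0 := by
    intro u h
    by_contra hu
    exact (hinnpos u hu).ne' (h u)
  -- torsion-freeness: ∇_W Z = ∇_Z W - [Z, W]
  have hflip : ∀ Z : L, nab.flip Z = nab Z - (LieAlgebra.ad ℝ L Z : L →ₗ[ℝ] L) := by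
    intro Z
    ext W
    have key : ∀ v : L, inn (nab W Z - (nab Z W - ⁅Z, W⁆)) v = 0 := by
      intro v
      have h1 := hkoszul W Z v
      have h2 := hkoszul Z W v
      have e1 : (⁅W, Z⁆ : L) = -⁅Z, W⁆ := by rw [← lie_skew]
      have e2 : (⁅v, Z⁆ : L) = -⁅Z, v⁆ := by rw [← lie_skew]
      have e3 : (⁅W, v⁆ : L) = -⁅v, W⁆ := by rw [← lie_skew]
      simp only [e1, e2, e3, map_neg, map_sub, LinearMap.sub_apply,
        LinearMap.neg_apply] at h1 h2 ⊢
      linarith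
    have h0 : nab W Z - (nab Z W - ⁅Z, W⁆) = 0 := hinnnd _ key
    have h0' : nab W Z = nab Z W - ⁅Z, W⁆ := sub_eq_zero.mp h0
    simp only [LinearMap.flip_apply, LinearMap.sub_apply, LinearMap.coe_mk,
      LieHom.coe_toLinearMap, LieAlgebra.ad_apply]
    exact h0'
  -- trace of ad Z vanishes
  have htrad : ∀ Z : L, LinearMap.trace ℝ L (LieAlgebra.ad ℝ L Z : L →ₗ[ℝ] L) = 0 := by
    intro Z
    refine trace_eq_zero_of_skew' B hBnd _ ?_
    intro u v
    have := hBinv Z u v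
    simp only [LieHom.coe_toLinearMap, LieAlgebra.ad_apply]
    linarith
  -- trace of ∇_Z vanishes
  have htrnab : ∀ Z : L, LinearMap.trace ℝ L (nab Z) = 0 := by
    intro Z
    refine trace_eq_zero_of_skew' inn hinnnd (nab Z) ?_
    intro u v
    have h1 := hkoszul Z u v
    have h2 := hkoszul Z v u
    have e1 : (⁅v, Z⁆ : L) = -⁅Z, v⁆ := by rw [← lie_skew]
    have e2 : (⁅u, Z⁆ : L) = -⁅Z, u⁆ := by rw [← lie_skew]
    have e3 : (⁅v, u⁆ : L) = -⁅u, v⁆ := by rw [← lie_skew]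
    rw [hinnsymm u (nab Z v)]
    simp only [e1, e2, e3, map_neg, LinearMap.neg_apply] at h1 h2 ⊢
    linarith
  intro X Y
  rw [hRic X Y]
  simp only [hflip]
  rw [LinearMap.sub_comp, LinearMap.sub_comp]
  simp only [map_add, map_sub, htrnab, htrad]
  simp only [LinearMap.comp_sub, LinearMap.sub_comp, map_add, map_sub]
  have e1 := LinearMap.trace_comp_comm' (nab Y) ((LieAlgebra.ad ℝ L X : L →ₗ[ℝ] L))
  have e2 := LinearMap.trace_comp_comm'
    ((LieAlgebra.ad ℝ L Y : L →ₗ[ℝ] L)) ((LieAlgebra.ad ℝ L X : L →ₗ[ℝ] L))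
  linarith
end

section
/- Let 𝔤 be a quadratic Lie algebra with inner product ⟨·,·⟩, let {X_1,…,X_n} be a ⟨·,·⟩-orthonormal basis with (X_i,X_j) = λ_i δ_ij (λ_i ≠ 0), set μ_i = 1/λ_i, and let Ric be the algebraically defined Ricci tensor of the Koszul connection. Then for all j, k: Ric(X_j, X_k) = −(1/2) Σ_{i<l} ((μ_l − μ_i)² − μ_k μ_j) · (C_ki^l/μ_l) · (C_ji^l/μ_l). -/
/-- Ricci curvature formula on a quadratic Lie algebra in terms of the
structure constants of an orthonormal basis:
`Ric(X_j,X_k) = −(1/2) Σ_{i<l} ((μ_l − μ_i)² − μ_k μ_j) (C_ki^l/μ_l)(C_ji^l/μ_l)`. -/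
theorem ricci_structure_constants_formula_quadratic
    (L : Type) [LieRing L] [LieAlgebra ℝ L] [FiniteDimensional ℝ L]
    (B : L →ₗ[ℝ] L →ₗ[ℝ] ℝ)
    (hBsymm : ∀ u v : L, B u v = B v u)
    (hBnd : ∀ u : L, (∀ v : L, B u v = 0) → u = 0)
    (hBinv : ∀ X Y Z : L, B ⁅X, Y⁆ Z + B Y ⁅X, Z⁆ = 0)
    (inn : L →ₗ[ℝ] L →ₗ[ℝ] ℝ)
    (hinnsymm : ∀ u v : L, inn u v = inn v u)
    (hinnpos : ∀ v : L, v ≠ 0 → 0 < inn v v)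
    (nab : L →ₗ[ℝ] L →ₗ[ℝ] L)
    (hkoszul : ∀ U V W : L, inn (nab U V) W =
      (1/2) * (inn ⁅U, V⁆ W - inn ⁅V, W⁆ U + inn ⁅W, U⁆ V))
    (Ric : L → L → ℝ)
    (hRic : ∀ U V : L, Ric U V = LinearMap.trace ℝ L
      (nab.flip (nab U V) - nab U ∘ₗ nab.flip V
        + nab.flip V ∘ₗ (LieAlgebra.ad ℝ L U : L →ₗ[ℝ] L)))
    (nn : ℕ) (b : Module.Basis (Fin nn) ℝ L)
    (hortho : ∀ i j : Fin nn, inn (b i) (b j) = if i = j then 1 else 0)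
    (lam : Fin nn → ℝ) (hlam : ∀ i, lam i ≠ 0)
    (hBval : ∀ i j : Fin nn, B (b i) (b j) = if i = j then lam i else 0)
    (μ : Fin nn → ℝ) (hμ : ∀ i, μ i = (lam i)⁻¹)
    (C : Fin nn → Fin nn → Fin nn → ℝ)
    (hC : ∀ i j : Fin nn, ⁅b i, b j⁆ = ∑ l, C i j l • b l) :
    ∀ j k : Fin nn,
      Ric (b j) (b k) =
        -(1/2) * ∑ i : Fin nn, ∑ l : Fin nn,
          if i < l then
            ((μ l - μ i)^2 - μ k * μ j) * (C k i l / μ l) * (C j i l / μ l)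
          else 0 := by
  intro j k
  -- basic coordinate facts
  have hrepr : ∀ (v : L) (m : Fin nn), b.repr v m = inn v (b m) := by
    intro v m
    conv_rhs => rw [← b.sum_repr v]
    simp [map_sum, hortho, -Module.Basis.sum_repr]
  have htr : ∀ f : L →ₗ[ℝ] L, LinearMap.trace ℝ L f = ∑ m, inn (f (b m)) (b m) := by
    intro f
    rw [LinearMap.trace_eq_matrix_trace ℝ b f, Matrix.trace]
    simp [Matrix.diag, LinearMap.toMatrix_apply, hrepr]
  have hCval : ∀ u v w : Fin nn, inn ⁅b u, b v⁆ (b w) = C u v w := by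
    intro u v w
    rw [hC]
    simp [map_sum, hortho]
  have hCskew : ∀ u v w : Fin nn, C u v w = -C v u w := by
    intro u v w
    have hbr : ⁅b u, b v⁆ = -⁅b v, b u⁆ := by rw [← lie_skew]
    rw [← hCval, ← hCval, hbr, map_neg, LinearMap.neg_apply]
  have hBC : ∀ u v w : Fin nn, B ⁅b u, b v⁆ (b w) = lam w * C u v w := by
    intro u v w
    rw [hC]
    simp [map_sum, hBval, mul_comm]
  have hT2 : ∀ x u v : Fin nn, lam v * C x u v = -(lam u * C x v u) := by
    intro x u v
    have h := hBinv (b x) (b u) (b v)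
    rw [hBsymm (b u) ⁅b x, b v⁆] at h
    rw [hBC, hBC] at h
    linarith
  have e23 : ∀ x v u : Fin nn, C x v u = -(μ u * (lam v * C x u v)) := by
    intro x v u
    have h := hT2 x u v
    have h2 : lam u * C x v u = -(lam v * C x u v) := by linarith
    have h3 : C x v u = (lam u)⁻¹ * (lam u * C x v u) := by
      rw [inv_mul_cancel_left₀ (hlam u)]
    rw [hμ, h3, h2]; ring
  have hμl : ∀ i : Fin nn, μ i * lam i = 1 := fun i => by
    rw [hμ]; exact inv_mul_cancel₀ (hlam i)
  have hC0a : ∀ u v : Fin nn, C u u v = 0 := by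
    intro u v; have := hCskew u u v; linarith
  have hC0b : ∀ u v : Fin nn, C u v v = 0 := by
    intro u v
    have h := e23 u v v
    rw [← mul_assoc, hμl] at h
    linarith
  have hC0c : ∀ u v : Fin nn, C u v u = 0 := by
    intro u v
    have h := e23 u v u
    rw [hC0a u v] at h
    simpa using h
  -- Koszul in coordinates
  have hG : ∀ u v w : Fin nn, inn (nab (b u) (b v)) (b w)
      = (1/2) * (C u v w - C v w u + C w u v) := by
    intro u v w
    rw [hkoszul, hCval, hCval, hCval]
  have hnabB : ∀ u v : Fin nn, nab (b u) (b v)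
      = ∑ p, ((1/2) * (C u v p - C v p u + C p u v)) • b p := by
    intro u v
    conv_lhs => rw [← b.sum_repr (nab (b u) (b v))]
    refine Finset.sum_congr rfl fun p _ => ?_
    rw [hrepr, hG]
  -- the three trace summands
  have hA0 : ∀ m : Fin nn, inn (nab (b m) (nab (b j) (b k))) (b m) = 0 := by
    intro m
    rw [hnabB j k]
    simp only [map_sum, map_smul, LinearMap.coe_sum, Finset.sum_apply,
      LinearMap.smul_apply, smul_eq_mul]
    refine Finset.sum_eq_zero fun p _ => ?_
    rw [hG, hC0c m p, hC0b p m, hC0a m p]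
    ring
  have hB2 : ∀ m : Fin nn, inn (nab (b j) (nab (b m) (b k))) (b m)
      = ∑ p, ((1/2) * (C m k p - C k p m + C p m k))
          * ((1/2) * (C j p m - C p m j + C m j p)) := by
    intro m
    rw [hnabB m k]
    simp only [map_sum, map_smul, LinearMap.coe_sum, Finset.sum_apply,
      LinearMap.smul_apply, smul_eq_mul]
    exact Finset.sum_congr rfl fun p _ => by rw [hG]
  have hC2 : ∀ m : Fin nn, inn (nab ⁅b j, b m⁆ (b k)) (b m)
      = ∑ p, C j m p * ((1/2) * (C p k m - C k m p + C m p k)) := by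
    intro m
    rw [hC j m]
    simp only [map_sum, map_smul, LinearMap.coe_sum, Finset.sum_apply,
      LinearMap.smul_apply, smul_eq_mul]
    exact Finset.sum_congr rfl fun p _ => by rw [hG]
  set F : Fin nn → Fin nn → ℝ := fun m p =>
    -(((1/2) * (C m k p - C k p m + C p m k))
        * ((1/2) * (C j p m - C p m j + C m j p)))
      + C j m p * ((1/2) * (C p k m - C k m p + C m p k)) with hFdef
  have H1 : Ric (b j) (b k) = ∑ m, ∑ p, F m p := by
    rw [hRic, htr]
    refine Finset.sum_congr rfl fun m _ => ?_
    simp only [LinearMap.sub_apply, LinearMap.add_apply, LinearMap.coe_comp,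
      Function.comp_apply, LinearMap.flip_apply, LieAlgebra.ad_apply,
      map_sub, map_add]
    rw [hA0 m, hB2 m, hC2 m, zero_sub, ← Finset.sum_neg_distrib,
      ← Finset.sum_add_distrib]
  have Hdiag : ∀ m : Fin nn, F m m = 0 := by
    intro m
    simp only [hFdef]
    rw [hC0c m k, hC0b k m, hC0a m k, hC0b j m, hC0a m j, hC0c m j]
    ring
  have H2 : ∀ m p : Fin nn, F m p
      = (if m < p then F m p else 0) + (if p = m then F m p else 0)
        + (if p < m then F m p else 0) := by
    intro m p
    rcases lt_trichotomy m p with h | h | h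
    · rw [if_pos h, if_neg (by exact fun hh => absurd hh.symm h.ne),
        if_neg (asymm h), add_zero, add_zero]
    · rw [if_neg (by simp [h]), if_pos h.symm, if_neg (by simp [h]), zero_add, add_zero]
    · rw [if_neg (asymm h), if_neg (fun hh => absurd hh h.ne), if_pos h,
        zero_add, zero_add]
  have H3 : (∑ m, ∑ p, F m p)
      = ∑ m, ∑ p, (if m < p then F m p + F p m else 0) := by
    calc (∑ m, ∑ p, F m p)
        = ∑ m, ∑ p, ((if m < p then F m p else 0) + (if p = m then F m p else 0)
            + (if p < m then F m p else 0)) :=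
          Finset.sum_congr rfl fun m _ => Finset.sum_congr rfl fun p _ => H2 m p
      _ = (∑ m, ∑ p, (if m < p then F m p else 0))
            + (∑ m, ∑ p, (if p = m then F m p else 0))
            + (∑ m, ∑ p, (if p < m then F m p else 0)) := by
          rw [← Finset.sum_add_distrib, ← Finset.sum_add_distrib]
          exact Finset.sum_congr rfl fun m _ => by
            rw [← Finset.sum_add_distrib, ← Finset.sum_add_distrib]
      _ = (∑ m, ∑ p, (if m < p then F m p else 0)) + 0
            + (∑ m, ∑ p, (if m < p then F p m else 0)) := by
          congr 1
          · congr 1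
            simp [Finset.sum_ite_eq', Hdiag]
          · rw [Finset.sum_comm]
      _ = ∑ m, ∑ p, (if m < p then F m p + F p m else 0) := by
          rw [add_zero, ← Finset.sum_add_distrib]
          refine Finset.sum_congr rfl fun m _ => ?_
          rw [← Finset.sum_add_distrib]
          refine Finset.sum_congr rfl fun p _ => ?_
          by_cases h : m < p
          · rw [if_pos h, if_pos h, if_pos h]
          · rw [if_neg h, if_neg h, if_neg h, add_zero]
  have H4 : ∀ m p : Fin nn, F m p + F p m
      = -(1/2) * (((μ p - μ m)^2 - μ k * μ j) * (C k m p / μ p) * (C j m p / μ p)) := by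
    intro m p
    have a1 : C m k p = -(C k m p) := hCskew m k p
    have a2 : C k p m = -(μ m * (lam p * C k m p)) := e23 k p m
    have a3 : C m p k = -(μ k * (lam p * C m k p)) := e23 m p k
    have a4 : C p m k = -(C m p k) := hCskew p m k
    have a5 : C j p m = -(μ m * (lam p * C j m p)) := e23 j p m
    have a6 : C m p j = -(μ j * (lam p * C m j p)) := e23 m p j
    have a7 : C m j p = -(C j m p) := hCskew m j p
    have a8 : C p m j = -(C m p j) := hCskew p m j
    have a9 : C p k m = -(C k p m) := hCskew p k m
    have a10 : C p j m = -(C j p m) := hCskew p j m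
    simp only [hFdef]
    rw [a9, a10, a4, a8, a2, a5, a3, a6, a1, a7]
    simp only [hμ]
    have hlm := hlam m; have hlp := hlam p; have hlj := hlam j; have hlk := hlam k
    generalize C k m p = x
    generalize C j m p = y
    generalize lam m = am at hlm ⊢
    generalize lam p = ap at hlp ⊢
    generalize lam j = aj at hlj ⊢
    generalize lam k = ak at hlk ⊢
    field_simp
    ring
  rw [H1, H3, Finset.mul_sum]
  refine Finset.sum_congr rfl fun m _ => ?_
  rw [Finset.mul_sum]
  refine Finset.sum_congr rfl fun p _ => ?_
  by_cases h : m < p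
  · rw [if_pos h, if_pos h, H4 m p]
  · rw [if_neg h, if_neg h, mul_zero]
end

section
/- Let 𝔤(n) carry the inner product ⟨e_i,e_j⟩ = δ_ij λ_i² with λ_i ≠ 0, and set f_i = e_i/λ_i. Then for X ∈ 𝔤(n), the endomorphism ad X is skew-adjoint with respect to ⟨·,·⟩ (equivalently, X is a left-invariant Killing field of the corresponding left-invariant metric) if and only if X = a(λ_1 f_1 − λ_2 f_2) for some a ∈ ℝ. -/
private lemma lie_sum' {L : Type*} [LieRing L] {ι : Type*} (x : L)
    (s : Finset ι) (f : ι → L) :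
    ⁅x, ∑ i ∈ s, f i⁆ = ∑ i ∈ s, ⁅x, f i⁆ :=
  map_sum (AddMonoidHom.mk' (fun y => ⁅x, y⁆) (lie_add x)) f s

private lemma sum_lie' {L : Type*} [LieRing L] {ι : Type*} (y : L)
    (s : Finset ι) (f : ι → L) :
    ⁅∑ i ∈ s, f i, y⁆ = ∑ i ∈ s, ⁅f i, y⁆ :=
  map_sum (AddMonoidHom.mk' (fun x => ⁅x, y⁆) (fun a b => add_lie a b y)) f s

/-- On 𝔤(n) with the metric ⟨e_i,e_j⟩ = δ_ij λ_i², a vector X is a Killing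
field (ad X skew-adjoint) iff X = a(λ₁f₁ − λ₂f₂) for some a ∈ ℝ. -/
theorem gn_killing_fields
    (n : ℕ) (hn : 1 ≤ n)
    (a : ℕ → ℝ)
    (hapos : ∀ s, 1 ≤ s → s ≤ n → 0 < a s)
    (hamono : ∀ s t, 1 ≤ s → s ≤ t → t ≤ n → a s ≤ a t)
    (L : Type) [LieRing L] [LieAlgebra ℝ L] [FiniteDimensional ℝ L]
    (D Z : L) (X Y : ℕ → L)
    (hDX : ∀ s, 1 ≤ s → s ≤ n → ⁅D, X s⁆ = a s • X s)
    (hDY : ∀ s, 1 ≤ s → s ≤ n → ⁅D, Y s⁆ = (-(a s)) • Y s)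
    (hXYs : ∀ s, 1 ≤ s → s ≤ n → ⁅X s, Y s⁆ = Z)
    (hDZ : ⁅D, Z⁆ = 0)
    (hXZ : ∀ s, 1 ≤ s → s ≤ n → ⁅X s, Z⁆ = 0)
    (hYZ : ∀ s, 1 ≤ s → s ≤ n → ⁅Y s, Z⁆ = 0)
    (hXX : ∀ s t, 1 ≤ s → s ≤ n → 1 ≤ t → t ≤ n → ⁅X s, X t⁆ = 0)
    (hYY : ∀ s t, 1 ≤ s → s ≤ n → 1 ≤ t → t ≤ n → ⁅Y s, Y t⁆ = 0)
    (hXYd : ∀ s t, 1 ≤ s → s ≤ n → 1 ≤ t → t ≤ n → s ≠ t → ⁅X s, Y t⁆ = 0)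
    (e : ℕ → L)
    (he1 : e 1 = D + Z) (he2 : e 2 = D - Z)
    (heodd : ∀ s, 1 ≤ s → s ≤ n → e (2*s+1) = Real.sqrt (a s) • (X s + Y s))
    (heeven : ∀ s, 1 ≤ s → s ≤ n → e (2*s+2) = Real.sqrt (a s) • (X s - Y s))
    (b : Module.Basis (Fin (2*n+2)) ℝ L)
    (hb : ∀ i : Fin (2*n+2), b i = e ((i : ℕ) + 1))
    (lam : ℕ → ℝ) (hlam : ∀ i, 1 ≤ i → i ≤ 2*n+2 → lam i ≠ 0)
    (inn : L →ₗ[ℝ] L →ₗ[ℝ] ℝ)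
    (hinnsymm : ∀ u v : L, inn u v = inn v u)
    (hinnpos : ∀ v : L, v ≠ 0 → 0 < inn v v)
    (hinne : ∀ i j, 1 ≤ i → i ≤ 2*n+2 → 1 ≤ j → j ≤ 2*n+2 →
      inn (e i) (e j) = if i = j then (lam i)^2 else 0)
    (f : ℕ → L) (hf : ∀ i, f i = (lam i)⁻¹ • e i)
    :
    ∀ V : L,
      (∀ U W : L, inn ⁅V, U⁆ W + inn U ⁅V, W⁆ = 0) ↔
      (∃ c : ℝ, V = c • (lam 1 • f 1 - lam 2 • f 2)) := by

  classical
  -- basic facts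
  have hlam1 : lam 1 ≠ 0 := hlam 1 (by omega) (by omega)
  have hlam2 : lam 2 ≠ 0 := hlam 2 (by omega) (by omega)
  -- e 1 - e 2 = 2 • Z
  have he12 : e 1 - e 2 = (2:ℝ) • Z := by rw [he1, he2]; module
  have hZdef : Z = (2:ℝ)⁻¹ • (e 1 - e 2) := by
    rw [he12, smul_smul]; norm_num
  -- X t, Y t in terms of e
  have hXe : ∀ t, 1 ≤ t → t ≤ n →
      e (2*t+1) + e (2*t+2) = (2 * Real.sqrt (a t)) • X t := by
    intro t h1 h2
    rw [heodd t h1 h2, heeven t h1 h2]; module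
  have hYe : ∀ t, 1 ≤ t → t ≤ n →
      e (2*t+1) - e (2*t+2) = (2 * Real.sqrt (a t)) • Y t := by
    intro t h1 h2
    rw [heodd t h1 h2, heeven t h1 h2]; module
  have hsqrt : ∀ t, 1 ≤ t → t ≤ n → (0:ℝ) < 2 * Real.sqrt (a t) := by
    intro t h1 h2
    have := Real.sqrt_pos.mpr (hapos t h1 h2)
    linarith
  -- inner product values
  have innZZ : inn Z Z = ((lam 1)^2 + (lam 2)^2) / 4 := by
    have h11 := hinne 1 1 (by omega) (by omega) (by omega) (by omega)
    have h12 := hinne 1 2 (by omega) (by omega) (by omega) (by omega)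
    have h21 := hinne 2 1 (by omega) (by omega) (by omega) (by omega)
    have h22 := hinne 2 2 (by omega) (by omega) (by omega) (by omega)
    rw [hZdef]
    simp only [map_sub, map_smul, LinearMap.sub_apply, LinearMap.smul_apply,
      smul_eq_mul, h11, h12, h21, h22]
    norm_num
    ring
  have innZZpos : 0 < inn Z Z := by
    rw [innZZ]; positivity
  have innXZ : ∀ t, 1 ≤ t → t ≤ n → inn (X t) Z = 0 := by
    intro t h1 h2
    have key : inn (e (2*t+1) + e (2*t+2)) (e 1 - e 2) = 0 := by
      have ha1 := hinne (2*t+1) 1 (by omega) (by omega) (by omega) (by omega)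
      have ha2 := hinne (2*t+1) 2 (by omega) (by omega) (by omega) (by omega)
      have hb1 := hinne (2*t+2) 1 (by omega) (by omega) (by omega) (by omega)
      have hb2 := hinne (2*t+2) 2 (by omega) (by omega) (by omega) (by omega)
      rw [if_neg (by omega)] at ha1 ha2 hb1 hb2
      simp only [map_add, map_sub, LinearMap.add_apply, LinearMap.sub_apply,
        ha1, ha2, hb1, hb2]
      ring
    rw [hXe t h1 h2, he12] at key
    simp only [map_smul, LinearMap.smul_apply, smul_eq_mul] at key
    have hr := hsqrt t h1 h2
    have : (2 * Real.sqrt (a t)) * 2 * inn (X t) Z = 0 := by linarith [key]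
    have h2r : (2 * Real.sqrt (a t)) * 2 ≠ 0 := by positivity
    exact (mul_eq_zero.mp this).resolve_left h2r
  have innYZ : ∀ t, 1 ≤ t → t ≤ n → inn (Y t) Z = 0 := by
    intro t h1 h2
    have key : inn (e (2*t+1) - e (2*t+2)) (e 1 - e 2) = 0 := by
      have ha1 := hinne (2*t+1) 1 (by omega) (by omega) (by omega) (by omega)
      have ha2 := hinne (2*t+1) 2 (by omega) (by omega) (by omega) (by omega)
      have hb1 := hinne (2*t+2) 1 (by omega) (by omega) (by omega) (by omega)
      have hb2 := hinne (2*t+2) 2 (by omega) (by omega) (by omega) (by omega)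
      rw [if_neg (by omega)] at ha1 ha2 hb1 hb2
      simp only [map_sub, LinearMap.sub_apply, ha1, ha2, hb1, hb2]
      ring
    rw [hYe t h1 h2, he12] at key
    simp only [map_smul, LinearMap.smul_apply, smul_eq_mul] at key
    have hr := hsqrt t h1 h2
    have : (2 * Real.sqrt (a t)) * 2 * inn (Y t) Z = 0 := by linarith [key]
    have h2r : (2 * Real.sqrt (a t)) * 2 ≠ 0 := by positivity
    exact (mul_eq_zero.mp this).resolve_left h2r
  have innXXne : ∀ t, 1 ≤ t → t ≤ n → inn (X t) (X t) ≠ 0 := by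
    intro t h1 h2
    have key : inn (e (2*t+1) + e (2*t+2)) (e (2*t+1) + e (2*t+2))
        = (lam (2*t+1))^2 + (lam (2*t+2))^2 := by
      have ha1 := hinne (2*t+1) (2*t+1) (by omega) (by omega) (by omega) (by omega)
      have ha2 := hinne (2*t+1) (2*t+2) (by omega) (by omega) (by omega) (by omega)
      have hb1 := hinne (2*t+2) (2*t+1) (by omega) (by omega) (by omega) (by omega)
      have hb2 := hinne (2*t+2) (2*t+2) (by omega) (by omega) (by omega) (by omega)
      rw [if_pos rfl] at ha1 hb2
      rw [if_neg (by omega)] at ha2 hb1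
      simp only [map_add, LinearMap.add_apply, ha1, ha2, hb1, hb2]
      ring
    rw [hXe t h1 h2] at key
    simp only [map_smul, LinearMap.smul_apply, smul_eq_mul] at key
    have hpos : 0 < (lam (2*t+1))^2 + (lam (2*t+2))^2 := by
      have := hlam (2*t+1) (by omega) (by omega)
      positivity
    intro h0
    rw [h0] at key
    simp at key
    rw [← key] at hpos
    exact lt_irrefl 0 hpos
  -- decomposition of arbitrary elements
  have hdecomp : ∀ W : L, ∃ (al be : ℝ) (p q : ℕ → ℝ),
      W = al • D + be • Z + ∑ s ∈ Finset.Icc 1 n, (p s • X s + q s • Y s) := by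
    have Pe : ∀ m, 1 ≤ m → m ≤ 2*n+2 → ∃ (al be : ℝ) (p q : ℕ → ℝ),
        e m = al • D + be • Z + ∑ s ∈ Finset.Icc 1 n, (p s • X s + q s • Y s) := by
      intro m hm1 hm2
      rcases Nat.even_or_odd m with hev | hod
      · obtain ⟨k, hk⟩ := hev
        rcases Nat.eq_or_lt_of_le hm1 with h1 | h1
        · omega
        · by_cases hm2' : m = 2
          · refine ⟨1, -1, 0, 0, ?_⟩
            rw [hm2', he2]
            simp [Finset.sum_const_zero]
            abel
          · -- m = 2*t+2 with 1 ≤ t ≤ n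
            have ht : ∃ t, 1 ≤ t ∧ t ≤ n ∧ m = 2*t+2 := ⟨k-1, by omega, by omega, by omega⟩
            obtain ⟨t, ht1, ht2, rfl⟩ := ht
            refine ⟨0, 0, (fun s => if s = t then Real.sqrt (a t) else 0),
              (fun s => if s = t then -Real.sqrt (a t) else 0), ?_⟩
            rw [heeven t ht1 ht2]
            rw [Finset.sum_eq_single_of_mem t (Finset.mem_Icc.mpr ⟨ht1, ht2⟩)
              (by intro s _ hs; simp [hs])]
            simp [smul_sub, sub_eq_add_neg]
      · obtain ⟨k, hk⟩ := hod
        by_cases hk0 : k = 0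
        · refine ⟨1, 1, 0, 0, ?_⟩
          have : m = 1 := by omega
          rw [this, he1]
          simp [Finset.sum_const_zero]
        · have ht1 : 1 ≤ k := by omega
          have ht2 : k ≤ n := by omega
          refine ⟨0, 0, (fun s => if s = k then Real.sqrt (a k) else 0),
            (fun s => if s = k then Real.sqrt (a k) else 0), ?_⟩
          have hmk : m = 2*k+1 := by omega
          rw [hmk, heodd k ht1 ht2]
          rw [Finset.sum_eq_single_of_mem k (Finset.mem_Icc.mpr ⟨ht1, ht2⟩)
            (by intro s _ hs; simp [hs])]
          simp [smul_add]
    intro W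
    have hW := Module.Basis.sum_repr b W
    rw [← hW]
    refine Finset.sum_induction (fun i => b.repr W i • b i)
      (fun w => ∃ (al be : ℝ) (p q : ℕ → ℝ),
        w = al • D + be • Z + ∑ s ∈ Finset.Icc 1 n, (p s • X s + q s • Y s))
      ?_ ?_ ?_
    · rintro u v ⟨a1, b1, p1, q1, h1⟩ ⟨a2, b2, p2, q2, h2⟩
      refine ⟨a1+a2, b1+b2, fun s => p1 s + p2 s, fun s => q1 s + q2 s, ?_⟩
      rw [h1, h2]
      have : ∀ s ∈ Finset.Icc 1 n,
          ((p1 s + p2 s) • X s + (q1 s + q2 s) • Y s)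
          = (p1 s • X s + q1 s • Y s) + (p2 s • X s + q2 s • Y s) := by
        intro s _; rw [add_smul, add_smul]; abel
      have hs : ∑ s ∈ Finset.Icc 1 n, ((p1 s + p2 s) • X s + (q1 s + q2 s) • Y s)
          = (∑ s ∈ Finset.Icc 1 n, (p1 s • X s + q1 s • Y s))
            + (∑ s ∈ Finset.Icc 1 n, (p2 s • X s + q2 s • Y s)) := by
        rw [← Finset.sum_add_distrib]
        exact Finset.sum_congr rfl this
      rw [hs, add_smul, add_smul]
      abel
    · refine ⟨0, 0, 0, 0, ?_⟩
      simp
    · intro i _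
      obtain ⟨al, be, p, q, h⟩ := Pe ((i:ℕ)+1) (by omega) (by omega)
      refine ⟨b.repr W i * al, b.repr W i * be,
        fun s => b.repr W i * p s, fun s => b.repr W i * q s, ?_⟩
      dsimp only
      rw [hb i, h, smul_add, smul_add, smul_smul, smul_smul, Finset.smul_sum]
      congr 1
      apply Finset.sum_congr rfl
      intro s _
      rw [smul_add, smul_smul, smul_smul]
  -- Z is central
  have hZcent : ∀ U : L, ⁅Z, U⁆ = 0 := by
    intro U
    obtain ⟨al, be, p, q, rfl⟩ := hdecomp U
    rw [lie_add, lie_add, lie_smul, lie_smul]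
    have h1 : ⁅Z, D⁆ = 0 := by rw [← lie_skew, hDZ, neg_zero]
    have h2 : ⁅Z, Z⁆ = (0:L) := lie_self Z
    have h3 : ∑ s ∈ Finset.Icc 1 n, ⁅Z, p s • X s + q s • Y s⁆ = 0 := by
      have : ∀ s ∈ Finset.Icc 1 n, ⁅Z, p s • X s + q s • Y s⁆ = 0 := by
        intro s hs
        obtain ⟨hs1, hs2⟩ := Finset.mem_Icc.mp hs
        rw [lie_add, lie_smul, lie_smul, ← lie_skew Z (X s), ← lie_skew Z (Y s),
          hXZ s hs1 hs2, hYZ s hs1 hs2]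
        simp
      exact Finset.sum_eq_zero this
    rw [lie_sum', h1, h2, h3]
    simp
  -- lam 1 • f 1 - lam 2 • f 2 = e 1 - e 2
  have hfe : lam 1 • f 1 - lam 2 • f 2 = e 1 - e 2 := by
    rw [hf 1, hf 2, smul_smul, smul_smul, mul_inv_cancel₀ hlam1,
      mul_inv_cancel₀ hlam2, one_smul, one_smul]
  intro V
  constructor
  · intro H
    obtain ⟨al, be, p, q, hV⟩ := hdecomp V
    -- bracket computations
    have hVZ : ⁅V, Z⁆ = 0 := by rw [← lie_skew, hZcent V, neg_zero]
    have hVX : ∀ t, 1 ≤ t → t ≤ n → ⁅V, X t⁆ = (al * a t) • X t - q t • Z := by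
      intro t h1 h2
      rw [hV, add_lie, add_lie, smul_lie, smul_lie]
      have hsum : ∑ s ∈ Finset.Icc 1 n, ⁅p s • X s + q s • Y s, X t⁆ = -(q t • Z) := by
        rw [Finset.sum_eq_single_of_mem t (Finset.mem_Icc.mpr ⟨h1, h2⟩)]
        · rw [add_lie, smul_lie, smul_lie, hXX t t h1 h2 h1 h2,
            ← lie_skew (Y t) (X t), hXYs t h1 h2]
          simp
        · intro s hs hst
          obtain ⟨hs1, hs2⟩ := Finset.mem_Icc.mp hs
          rw [add_lie, smul_lie, smul_lie, hXX s t hs1 hs2 h1 h2,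
            ← lie_skew (Y s) (X t), hXYd t s h1 h2 hs1 hs2 (fun h => hst h.symm)]
          simp
      rw [sum_lie', hsum, hDX t h1 h2, ← lie_skew Z (X t), hXZ t h1 h2]
      rw [smul_smul]
      simp [sub_eq_add_neg]
    have hVY : ∀ t, 1 ≤ t → t ≤ n → ⁅V, Y t⁆ = (-(al * a t)) • Y t + p t • Z := by
      intro t h1 h2
      rw [hV, add_lie, add_lie, smul_lie, smul_lie]
      have hsum : ∑ s ∈ Finset.Icc 1 n, ⁅p s • X s + q s • Y s, Y t⁆ = p t • Z := by
        rw [Finset.sum_eq_single_of_mem t (Finset.mem_Icc.mpr ⟨h1, h2⟩)]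
        · rw [add_lie, smul_lie, smul_lie, hYY t t h1 h2 h1 h2, hXYs t h1 h2]
          simp
        · intro s hs hst
          obtain ⟨hs1, hs2⟩ := Finset.mem_Icc.mp hs
          rw [add_lie, smul_lie, smul_lie, hYY s t hs1 hs2 h1 h2,
            hXYd s t hs1 hs2 h1 h2 hst]
          simp
      rw [sum_lie', hsum, hDY t h1 h2, ← lie_skew Z (Y t), hYZ t h1 h2]
      rw [smul_smul]
      simp
    -- q t = 0
    have hq : ∀ t, 1 ≤ t → t ≤ n → q t = 0 := by
      intro t h1 h2
      have hH := H (X t) Z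
      rw [hVZ, hVX t h1 h2] at hH
      simp only [map_sub, map_smul, LinearMap.sub_apply, LinearMap.smul_apply,
        smul_eq_mul, map_zero, innXZ t h1 h2, add_zero, mul_zero] at hH
      have : q t * inn Z Z = 0 := by linarith
      exact (mul_eq_zero.mp this).resolve_right (ne_of_gt innZZpos)
    have hp : ∀ t, 1 ≤ t → t ≤ n → p t = 0 := by
      intro t h1 h2
      have hH := H (Y t) Z
      rw [hVZ, hVY t h1 h2] at hH
      simp only [map_add, map_smul, LinearMap.add_apply, LinearMap.smul_apply,
        smul_eq_mul, map_zero, innYZ t h1 h2, add_zero, mul_zero] at hH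
      have : p t * inn Z Z = 0 := by linarith
      exact (mul_eq_zero.mp this).resolve_right (ne_of_gt innZZpos)
    -- al = 0
    have hal : al = 0 := by
      have hH := H (X 1) (X 1)
      rw [hVX 1 le_rfl hn, hq 1 le_rfl hn] at hH
      simp only [zero_smul, sub_zero, map_smul, LinearMap.smul_apply, smul_eq_mul] at hH
      have : al * a 1 * inn (X 1) (X 1) = 0 := by linarith
      rcases mul_eq_zero.mp this with h | h
      · rcases mul_eq_zero.mp h with h' | h'
        · exact h'
        · exact absurd h' (ne_of_gt (hapos 1 le_rfl hn))
      · exact absurd h (innXXne 1 le_rfl hn)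
    -- conclude V = be • Z
    have hVZ' : V = be • Z := by
      rw [hV, hal, zero_smul, zero_add]
      have : ∑ s ∈ Finset.Icc 1 n, (p s • X s + q s • Y s) = 0 := by
        apply Finset.sum_eq_zero
        intro s hs
        obtain ⟨hs1, hs2⟩ := Finset.mem_Icc.mp hs
        rw [hp s hs1 hs2, hq s hs1 hs2]
        simp
      rw [this, add_zero]
    refine ⟨be / 2, ?_⟩
    rw [hfe, hVZ', hZdef, smul_smul, div_eq_mul_inv]
  · rintro ⟨c, rfl⟩
    intro U W
    have hz : ⁅c • (lam 1 • f 1 - lam 2 • f 2), U⁆ = 0 := by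
      rw [hfe, he12, smul_smul, smul_lie, hZcent U, smul_zero]
    have hz2 : ⁅c • (lam 1 • f 1 - lam 2 • f 2), W⁆ = 0 := by
      rw [hfe, he12, smul_smul, smul_lie, hZcent W, smul_zero]
    rw [hz, hz2]
    simp
end

section
/- Let 𝔤(n) carry the inner product ⟨e_i,e_j⟩ = δ_ij λ_i² (λ_i ≠ 0), f_i = e_i/λ_i, and let Ric be the algebraically defined Ricci tensor of the Koszul connection. Then Ric(f_i, f_j) = 0 for all i ≠ j with {i,j} ≠ {1,2}. -/
section Aux
variable {L : Type} [LieRing L] [LieAlgebra ℝ L]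

lemma inn_nondeg (inn : L →ₗ[ℝ] L →ₗ[ℝ] ℝ)
    (hpos : ∀ v : L, v ≠ 0 → 0 < inn v v)
    {x y : L} (h : ∀ w, inn x w = inn y w) : x = y := by
  by_contra hxy
  have h0 : x - y ≠ 0 := sub_ne_zero.mpr hxy
  have hp := hpos _ h0
  have hz : inn (x - y) (x - y) = 0 := by
    have e1 : inn (x - y) (x - y) = inn x (x - y) - inn y (x - y) := by
      simp only [map_sub, LinearMap.sub_apply]; ring
    rw [e1, h (x - y), sub_self]
  linarith

lemma nab_equiv (inn : L →ₗ[ℝ] L →ₗ[ℝ] ℝ)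
    (hpos : ∀ v : L, v ≠ 0 → 0 < inn v v)
    (nab : L →ₗ[ℝ] L →ₗ[ℝ] L)
    (hkoszul : ∀ U V W : L, inn (nab U V) W =
      (1/2) * (inn ⁅U, V⁆ W - inn ⁅V, W⁆ U + inn ⁅W, U⁆ V))
    (φ : L →ₗ[ℝ] L) (hinv : ∀ w, φ (φ w) = w)
    (hiso : ∀ u v, inn (φ u) (φ v) = inn u v)
    (hlie : ∀ u v, ⁅φ u, φ v⁆ = φ ⁅u, v⁆) :
    ∀ u v, nab (φ u) (φ v) = φ (nab u v) := by
  intro u v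
  apply inn_nondeg inn hpos
  intro w
  obtain ⟨w', rfl⟩ : ∃ w', w = φ w' := ⟨φ w, (hinv w).symm⟩
  simp only [hkoszul, hlie, hiso]

lemma ric_equiv (nab : L →ₗ[ℝ] L →ₗ[ℝ] L) (Ric : L → L → ℝ)
    (hRic : ∀ U V : L, Ric U V = LinearMap.trace ℝ L
      (nab.flip (nab U V) - nab U ∘ₗ nab.flip V
        + nab.flip V ∘ₗ (LieAlgebra.ad ℝ L U : L →ₗ[ℝ] L)))
    (φ : L →ₗ[ℝ] L) (hinv : ∀ w, φ (φ w) = w)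
    (hlie : ∀ u v, ⁅φ u, φ v⁆ = φ ⁅u, v⁆)
    (hnab : ∀ u v, nab (φ u) (φ v) = φ (nab u v)) (u v : L) :
    Ric (φ u) (φ v) = Ric u v := by
  rw [hRic, hRic]
  have hop : (nab.flip (nab (φ u) (φ v)) - nab (φ u) ∘ₗ nab.flip (φ v)
        + nab.flip (φ v) ∘ₗ (LieAlgebra.ad ℝ L (φ u) : L →ₗ[ℝ] L))
      = φ ∘ₗ ((nab.flip (nab u v) - nab u ∘ₗ nab.flip v
        + nab.flip v ∘ₗ (LieAlgebra.ad ℝ L u : L →ₗ[ℝ] L)) ∘ₗ φ) := by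
    ext w
    simp only [LinearMap.add_apply, LinearMap.sub_apply, LinearMap.coe_comp,
      Function.comp_apply, LinearMap.flip_apply, LieAlgebra.ad_apply]
    have h1 : nab w (nab (φ u) (φ v)) = φ (nab (φ w) (nab u v)) := by
      rw [hnab u v]
      conv_lhs => rw [← hinv w]
      rw [hnab]
    have h2 : nab (φ u) (nab w (φ v)) = φ (nab u (nab (φ w) v)) := by
      have hh : nab w (φ v) = φ (nab (φ w) v) := by
        conv_lhs => rw [← hinv w]
        rw [hnab]
      rw [hh, hnab]
    have h3 : nab ⁅φ u, w⁆ (φ v) = φ (nab ⁅u, φ w⁆ v) := by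
      have hh : ⁅φ u, w⁆ = φ ⁅u, φ w⁆ := by
        conv_lhs => rw [← hinv w]
        rw [hlie]
      rw [hh, hnab]
    rw [h1, h2, h3, ← map_sub, ← map_add]
  rw [hop]
  generalize (nab.flip (nab u v) - nab u ∘ₗ nab.flip v
        + nab.flip v ∘ₗ (LieAlgebra.ad ℝ L u : L →ₗ[ℝ] L)) = T
  have hφφ1 : (φ * φ : L →ₗ[ℝ] L) = 1 := by
    ext w
    simp only [Module.End.mul_apply, Module.End.one_apply]
    exact hinv w
  have : φ ∘ₗ (T ∘ₗ φ) = φ * T * φ := by rw [mul_assoc]; rfl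
  rw [this, LinearMap.trace_mul_comm, ← mul_assoc, hφφ1, one_mul]

lemma ric_smul (nab : L →ₗ[ℝ] L →ₗ[ℝ] L) (Ric : L → L → ℝ)
    (hRic : ∀ U V : L, Ric U V = LinearMap.trace ℝ L
      (nab.flip (nab U V) - nab U ∘ₗ nab.flip V
        + nab.flip V ∘ₗ (LieAlgebra.ad ℝ L U : L →ₗ[ℝ] L)))
    (r t : ℝ) (u v : L) :
    Ric (r • u) (t • v) = (r * t) * Ric u v := by
  rw [hRic, hRic]
  have hop : (nab.flip (nab (r • u) (t • v)) - nab (r • u) ∘ₗ nab.flip (t • v)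
        + nab.flip (t • v) ∘ₗ (LieAlgebra.ad ℝ L (r • u) : L →ₗ[ℝ] L))
      = (r * t) • (nab.flip (nab u v) - nab u ∘ₗ nab.flip v
        + nab.flip v ∘ₗ (LieAlgebra.ad ℝ L u : L →ₗ[ℝ] L)) := by
    ext w
    simp only [LinearMap.add_apply, LinearMap.sub_apply, LinearMap.coe_comp,
      Function.comp_apply, LinearMap.flip_apply, LieAlgebra.ad_apply,
      LinearMap.smul_apply, map_smul, smul_lie, lie_smul, smul_sub, smul_add, smul_smul]
    module
  rw [hop, map_smul, smul_eq_mul]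
end Aux


lemma gn_ricci_sign
    (n : ℕ)
    (a : ℕ → ℝ)
    (hapos : ∀ s, 1 ≤ s → s ≤ n → 0 < a s)
    (L : Type) [LieRing L] [LieAlgebra ℝ L]
    (D Z : L) (X Y : ℕ → L)
    (hDX : ∀ s, 1 ≤ s → s ≤ n → ⁅D, X s⁆ = a s • X s)
    (hDY : ∀ s, 1 ≤ s → s ≤ n → ⁅D, Y s⁆ = (-(a s)) • Y s)
    (hXYs : ∀ s, 1 ≤ s → s ≤ n → ⁅X s, Y s⁆ = Z)
    (hDZ : ⁅D, Z⁆ = 0)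
    (hXZ : ∀ s, 1 ≤ s → s ≤ n → ⁅X s, Z⁆ = 0)
    (hYZ : ∀ s, 1 ≤ s → s ≤ n → ⁅Y s, Z⁆ = 0)
    (hXX : ∀ s t, 1 ≤ s → s ≤ n → 1 ≤ t → t ≤ n → ⁅X s, X t⁆ = 0)
    (hYY : ∀ s t, 1 ≤ s → s ≤ n → 1 ≤ t → t ≤ n → ⁅Y s, Y t⁆ = 0)
    (hXYd : ∀ s t, 1 ≤ s → s ≤ n → 1 ≤ t → t ≤ n → s ≠ t → ⁅X s, Y t⁆ = 0)
    (e : ℕ → L)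
    (he1 : e 1 = D + Z) (he2 : e 2 = D - Z)
    (heodd : ∀ s, 1 ≤ s → s ≤ n → e (2*s+1) = Real.sqrt (a s) • (X s + Y s))
    (heeven : ∀ s, 1 ≤ s → s ≤ n → e (2*s+2) = Real.sqrt (a s) • (X s - Y s))
    (b : Module.Basis (Fin (2*n+2)) ℝ L)
    (hb : ∀ i : Fin (2*n+2), b i = e ((i : ℕ) + 1))
    (lam : ℕ → ℝ)
    (inn : L →ₗ[ℝ] L →ₗ[ℝ] ℝ)
    (hinnpos : ∀ v : L, v ≠ 0 → 0 < inn v v)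
    (hinne : ∀ i j, 1 ≤ i → i ≤ 2*n+2 → 1 ≤ j → j ≤ 2*n+2 →
      inn (e i) (e j) = if i = j then (lam i)^2 else 0)
    (f : ℕ → L) (hf : ∀ i, f i = (lam i)⁻¹ • e i)
    (nab : L →ₗ[ℝ] L →ₗ[ℝ] L)
    (hkoszul : ∀ U V W : L, inn (nab U V) W =
      (1/2) * (inn ⁅U, V⁆ W - inn ⁅V, W⁆ U + inn ⁅W, U⁆ V))
    (Ric : L → L → ℝ)
    (hRic : ∀ U V : L, Ric U V = LinearMap.trace ℝ L
      (nab.flip (nab U V) - nab U ∘ₗ nab.flip V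
        + nab.flip V ∘ₗ (LieAlgebra.ad ℝ L U : L →ₗ[ℝ] L)))
    (ε : ℕ → ℝ)
    (hε2 : ε 2 = ε 1)
    (hεsq : ∀ k, ε k * ε k = 1)
    (hεb : ∀ s, 1 ≤ s → s ≤ n → ε (2*s+2) = ε 1 * ε (2*s+1)) :
    ∀ k l, 1 ≤ k → k ≤ 2*n+2 → 1 ≤ l → l ≤ 2*n+2 →
      Ric (f k) (f l) = (ε k * ε l) * Ric (f k) (f l) := by
  -- generator bracket helpers
  have hZX : ∀ s, 1 ≤ s → s ≤ n → ⁅Z, X s⁆ = 0 := by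
    intro s h1 h2
    rw [← lie_skew, hXZ s h1 h2, neg_zero]
  have hZY : ∀ s, 1 ≤ s → s ≤ n → ⁅Z, Y s⁆ = 0 := by
    intro s h1 h2
    rw [← lie_skew, hYZ s h1 h2, neg_zero]
  have hYXs : ∀ s, 1 ≤ s → s ≤ n → ⁅Y s, X s⁆ = -Z := by
    intro s h1 h2
    rw [← lie_skew, hXYs s h1 h2]
  have hYXd : ∀ s t, 1 ≤ s → s ≤ n → 1 ≤ t → t ≤ n → s ≠ t → ⁅Y s, X t⁆ = 0 := by
    intro s t h1 h2 h3 h4 h5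
    rw [← lie_skew, hXYd t s h3 h4 h1 h2 (Ne.symm h5), neg_zero]
  have hsq : ∀ s, 1 ≤ s → s ≤ n → Real.sqrt (a s) * Real.sqrt (a s) = a s :=
    fun s h1 h2 => Real.mul_self_sqrt (le_of_lt (hapos s h1 h2))
  -- bracket table
  have hb12 : ⁅e 1, e 2⁆ = (0 : L) := by
    rw [he1, he2, lie_sub, add_lie, add_lie, hDZ, lie_self]
    have hZD : ⁅Z, D⁆ = 0 := by rw [← lie_skew, hDZ, neg_zero]
    rw [hZD, lie_self]
    abel
  have hb1o : ∀ s, 1 ≤ s → s ≤ n → ⁅e 1, e (2*s+1)⁆ = a s • e (2*s+2) := by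
    intro s h1 h2
    rw [he1, heodd s h1 h2, heeven s h1 h2, lie_smul, add_lie, lie_add, lie_add,
      hDX s h1 h2, hDY s h1 h2, hZX s h1 h2, hZY s h1 h2]
    module
  have hb1e : ∀ s, 1 ≤ s → s ≤ n → ⁅e 1, e (2*s+2)⁆ = a s • e (2*s+1) := by
    intro s h1 h2
    rw [he1, heodd s h1 h2, heeven s h1 h2, lie_smul, add_lie, lie_sub, lie_sub,
      hDX s h1 h2, hDY s h1 h2, hZX s h1 h2, hZY s h1 h2]
    module
  have hb2o : ∀ s, 1 ≤ s → s ≤ n → ⁅e 2, e (2*s+1)⁆ = a s • e (2*s+2) := by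
    intro s h1 h2
    rw [he2, heodd s h1 h2, heeven s h1 h2, lie_smul, sub_lie, lie_add, lie_add,
      hDX s h1 h2, hDY s h1 h2, hZX s h1 h2, hZY s h1 h2]
    module
  have hb2e : ∀ s, 1 ≤ s → s ≤ n → ⁅e 2, e (2*s+2)⁆ = a s • e (2*s+1) := by
    intro s h1 h2
    rw [he2, heodd s h1 h2, heeven s h1 h2, lie_smul, sub_lie, lie_sub, lie_sub,
      hDX s h1 h2, hDY s h1 h2, hZX s h1 h2, hZY s h1 h2]
    module
  have hboo : ∀ s t, 1 ≤ s → s ≤ n → 1 ≤ t → t ≤ n →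
      ⁅e (2*s+1), e (2*t+1)⁆ = (0 : L) := by
    intro s t hs1 hs2 ht1 ht2
    rw [heodd s hs1 hs2, heodd t ht1 ht2, smul_lie, lie_smul, add_lie, lie_add, lie_add,
      hXX s t hs1 hs2 ht1 ht2, hYY s t hs1 hs2 ht1 ht2]
    rcases eq_or_ne s t with rfl | hst
    · rw [hXYs s hs1 hs2, hYXs s hs1 hs2]
      simp
    · rw [hXYd s t hs1 hs2 ht1 ht2 hst, hYXd s t hs1 hs2 ht1 ht2 hst]
      simp
  have hbee : ∀ s t, 1 ≤ s → s ≤ n → 1 ≤ t → t ≤ n →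
      ⁅e (2*s+2), e (2*t+2)⁆ = (0 : L) := by
    intro s t hs1 hs2 ht1 ht2
    rw [heeven s hs1 hs2, heeven t ht1 ht2, smul_lie, lie_smul, sub_lie, lie_sub, lie_sub,
      hXX s t hs1 hs2 ht1 ht2, hYY s t hs1 hs2 ht1 ht2]
    rcases eq_or_ne s t with rfl | hst
    · rw [hXYs s hs1 hs2, hYXs s hs1 hs2]
      simp
    · rw [hXYd s t hs1 hs2 ht1 ht2 hst, hYXd s t hs1 hs2 ht1 ht2 hst]
      simp
  have hboe_same : ∀ s, 1 ≤ s → s ≤ n →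
      ⁅e (2*s+1), e (2*s+2)⁆ = a s • e 2 - a s • e 1 := by
    intro s h1 h2
    rw [heodd s h1 h2, heeven s h1 h2, smul_lie, lie_smul, add_lie, lie_sub, lie_sub,
      hXX s s h1 h2 h1 h2, hYY s s h1 h2 h1 h2, hXYs s h1 h2, hYXs s h1 h2,
      smul_smul, hsq s h1 h2, he1, he2]
    module
  have hboe_diff : ∀ s t, 1 ≤ s → s ≤ n → 1 ≤ t → t ≤ n → s ≠ t →
      ⁅e (2*s+1), e (2*t+2)⁆ = (0 : L) := by
    intro s t hs1 hs2 ht1 ht2 hst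
    rw [heodd s hs1 hs2, heeven t ht1 ht2, smul_lie, lie_smul, add_lie, lie_sub, lie_sub,
      hXX s t hs1 hs2 ht1 ht2, hYY s t hs1 hs2 ht1 ht2,
      hXYd s t hs1 hs2 ht1 ht2 hst, hYXd s t hs1 hs2 ht1 ht2 hst]
    simp
  have hbeo_diff : ∀ s t, 1 ≤ s → s ≤ n → 1 ≤ t → t ≤ n → s ≠ t →
      ⁅e (2*s+2), e (2*t+1)⁆ = (0 : L) := by
    intro s t hs1 hs2 ht1 ht2 hst
    have h := hboe_diff t s ht1 ht2 hs1 hs2 (Ne.symm hst)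
    rw [← lie_skew, h, neg_zero]
  -- the involution φ
  set φ : L →ₗ[ℝ] L := b.constr ℝ (fun i => ε ((i : ℕ) + 1) • b i) with hφdef
  have hφb : ∀ i : Fin (2*n+2), φ (b i) = ε ((i : ℕ) + 1) • b i := by
    intro i
    rw [hφdef]
    exact b.constr_basis ℝ _ i
  have hφe : ∀ k, 1 ≤ k → k ≤ 2*n+2 → φ (e k) = ε k • e k := by
    intro k h1 h2
    have hi : k - 1 < 2*n+2 := by omega
    have hek : e k = b ⟨k-1, hi⟩ := by rw [hb ⟨k-1, hi⟩]; congr 1; simp only [Fin.val_mk]; omega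
    rw [hek, hφb ⟨k-1, hi⟩, hb ⟨k-1, hi⟩]
    simp only [Fin.val_mk]
    have hk' : k - 1 + 1 = k := by omega
    rw [hk']
  -- case analysis helper
  have kcases : ∀ k, 1 ≤ k → k ≤ 2*n+2 → k = 1 ∨ k = 2 ∨
      (∃ s, 1 ≤ s ∧ s ≤ n ∧ k = 2*s+1) ∨ (∃ s, 1 ≤ s ∧ s ≤ n ∧ k = 2*s+2) := by
    intro k h1 h2
    rcases Nat.lt_or_ge k 3 with h | h
    · interval_cases k
      · exact Or.inl rfl
      · exact Or.inr (Or.inl rfl)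
    · rcases Nat.even_or_odd k with ⟨s, hs⟩ | ⟨s, hs⟩
      · exact Or.inr (Or.inr (Or.inr ⟨s - 1, by omega, by omega, by omega⟩))
      · exact Or.inr (Or.inr (Or.inl ⟨s, by omega, by omega, by omega⟩))
  -- equivariance of φ with respect to brackets, on basis vectors
  have hswap : ∀ u v : L, ⁅φ u, φ v⁆ = φ ⁅u, v⁆ → ⁅φ v, φ u⁆ = φ ⁅v, u⁆ := by
    intro u v h
    have h2 : ⁅φ v, φ u⁆ = -⁅φ u, φ v⁆ := by rw [lie_skew]
    rw [h2, h, ← map_neg]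
    congr 1
    rw [lie_skew]
  have hcore : ∀ k l, 1 ≤ k → k ≤ 2*n+2 → 1 ≤ l → l ≤ 2*n+2 → k ≤ l →
      ⁅φ (e k), φ (e l)⁆ = φ ⁅e k, e l⁆ := by
    intro k l hk1 hk2 hl1 hl2 hkl
    rcases kcases k hk1 hk2 with rfl | rfl | ⟨s, hs1, hs2, rfl⟩ | ⟨s, hs1, hs2, rfl⟩ <;>
      rcases kcases l hl1 hl2 with rfl | rfl | ⟨t, ht1, ht2, rfl⟩ | ⟨t, ht1, ht2, rfl⟩
    -- (1,1)
    · rw [lie_self, lie_self, map_zero]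
    -- (1,2)
    · rw [hφe 1 (by omega) (by omega), hφe 2 (by omega) (by omega),
        smul_lie, lie_smul, hb12, smul_zero, smul_zero, map_zero]
    -- (1,O)
    · rw [hφe 1 (by omega) (by omega), hφe (2*t+1) (by omega) (by omega),
        smul_lie, lie_smul, smul_smul, hb1o t ht1 ht2, map_smul,
        hφe (2*t+2) (by omega) (by omega), hεb t ht1 ht2]
      module
    -- (1,E)
    · rw [hφe 1 (by omega) (by omega), hφe (2*t+2) (by omega) (by omega),
        smul_lie, lie_smul, smul_smul, hb1e t ht1 ht2, map_smul,
        hφe (2*t+1) (by omega) (by omega), hεb t ht1 ht2]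
      have hc : ε 1 * (ε 1 * ε (2*t+1)) = ε (2*t+1) := by
        linear_combination ε (2*t+1) * hεsq 1
      rw [hc]
      module
    -- (2,1) impossible
    · omega
    -- (2,2)
    · rw [lie_self, lie_self, map_zero]
    -- (2,O)
    · rw [hφe 2 (by omega) (by omega), hφe (2*t+1) (by omega) (by omega),
        smul_lie, lie_smul, smul_smul, hb2o t ht1 ht2, map_smul,
        hφe (2*t+2) (by omega) (by omega), hεb t ht1 ht2, hε2]
      module
    -- (2,E)
    · rw [hφe 2 (by omega) (by omega), hφe (2*t+2) (by omega) (by omega),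
        smul_lie, lie_smul, smul_smul, hb2e t ht1 ht2, map_smul,
        hφe (2*t+1) (by omega) (by omega), hεb t ht1 ht2, hε2]
      have hc : ε 1 * (ε 1 * ε (2*t+1)) = ε (2*t+1) := by
        linear_combination ε (2*t+1) * hεsq 1
      rw [hc]
      module
    -- (O,1)(O,2) impossible
    · omega
    · omega
    -- (O,O)
    · rw [hφe (2*s+1) (by omega) (by omega), hφe (2*t+1) (by omega) (by omega),
        smul_lie, lie_smul, hboo s t hs1 hs2 ht1 ht2, smul_zero, smul_zero, map_zero]
    -- (O,E)
    · rcases eq_or_ne s t with rfl | hst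
      · rw [hφe (2*s+1) (by omega) (by omega), hφe (2*s+2) (by omega) (by omega),
          smul_lie, lie_smul, smul_smul, hboe_same s hs1 hs2, hεb s hs1 hs2]
        have hc : ε (2*s+1) * (ε 1 * ε (2*s+1)) = ε 1 := by
          linear_combination ε 1 * hεsq (2*s+1)
        rw [hc, map_sub, map_smul, map_smul, hφe 2 (by omega) (by omega),
          hφe 1 (by omega) (by omega), hε2]
        module
      · rw [hφe (2*s+1) (by omega) (by omega), hφe (2*t+2) (by omega) (by omega),
          smul_lie, lie_smul, hboe_diff s t hs1 hs2 ht1 ht2 hst,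
          smul_zero, smul_zero, map_zero]
    -- (E,1)(E,2) impossible
    · omega
    · omega
    -- (E,O) : s ≠ t forced
    · have hst : s ≠ t := by omega
      rw [hφe (2*s+2) (by omega) (by omega), hφe (2*t+1) (by omega) (by omega),
        smul_lie, lie_smul, hbeo_diff s t hs1 hs2 ht1 ht2 hst,
        smul_zero, smul_zero, map_zero]
    -- (E,E)
    · rw [hφe (2*s+2) (by omega) (by omega), hφe (2*t+2) (by omega) (by omega),
        smul_lie, lie_smul, hbee s t hs1 hs2 ht1 ht2, smul_zero, smul_zero, map_zero]
  have hliee : ∀ k l, 1 ≤ k → k ≤ 2*n+2 → 1 ≤ l → l ≤ 2*n+2 →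
      ⁅φ (e k), φ (e l)⁆ = φ ⁅e k, e l⁆ := by
    intro k l hk1 hk2 hl1 hl2
    rcases le_total k l with h | h
    · exact hcore k l hk1 hk2 hl1 hl2 h
    · exact hswap _ _ (hcore l k hl1 hl2 hk1 hk2 h)
  -- extend to all of L
  have hlie : ∀ u v : L, ⁅φ u, φ v⁆ = φ ⁅u, v⁆ := by
    let B1 : L →ₗ[ℝ] L →ₗ[ℝ] L := LinearMap.mk₂ ℝ (fun u v => ⁅φ u, φ v⁆)
      (by intros; simp [add_lie]) (by intros; simp [smul_lie])
      (by intros; simp [lie_add]) (by intros; simp [lie_smul])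
    let B2 : L →ₗ[ℝ] L →ₗ[ℝ] L := LinearMap.mk₂ ℝ (fun u v => φ ⁅u, v⁆)
      (by intros; simp [add_lie]) (by intros; simp [smul_lie])
      (by intros; simp [lie_add]) (by intros; simp [lie_smul])
    have hB : B1 = B2 := by
      apply b.ext
      intro i
      apply b.ext
      intro j
      show ⁅φ (b i), φ (b j)⁆ = φ ⁅b i, b j⁆
      rw [hb i, hb j]
      exact hliee _ _ (by omega) (i.isLt) (by omega) (j.isLt)
    intro u v
    exact LinearMap.ext_iff.mp (LinearMap.ext_iff.mp hB u) v
  -- isometry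
  have hisoe : ∀ k l, 1 ≤ k → k ≤ 2*n+2 → 1 ≤ l → l ≤ 2*n+2 →
      inn (φ (e k)) (φ (e l)) = inn (e k) (e l) := by
    intro k l hk1 hk2 hl1 hl2
    rw [hφe k hk1 hk2, hφe l hl1 hl2]
    simp only [map_smul, LinearMap.smul_apply, smul_eq_mul]
    rw [hinne k l hk1 hk2 hl1 hl2]
    by_cases hkl : k = l
    · subst hkl
      rw [if_pos rfl]
      linear_combination (lam k)^2 * hεsq k
    · rw [if_neg hkl]
      ring
  have hiso : ∀ u v : L, inn (φ u) (φ v) = inn u v := by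
    let B1 : L →ₗ[ℝ] L →ₗ[ℝ] ℝ := LinearMap.mk₂ ℝ (fun u v => inn (φ u) (φ v))
      (by intros; simp) (by intros; simp)
      (by intros; simp) (by intros; simp)
    have hB : B1 = inn := by
      apply b.ext
      intro i
      apply b.ext
      intro j
      show inn (φ (b i)) (φ (b j)) = inn (b i) (b j)
      rw [hb i, hb j]
      exact hisoe _ _ (by omega) (i.isLt) (by omega) (j.isLt)
    intro u v
    exact LinearMap.ext_iff.mp (LinearMap.ext_iff.mp hB u) v
  -- involution
  have hinv : ∀ w : L, φ (φ w) = w := by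
    have hB : φ ∘ₗ φ = LinearMap.id := by
      apply b.ext
      intro i
      simp only [LinearMap.coe_comp, Function.comp_apply, LinearMap.id_apply]
      rw [hφb i, map_smul, hφb i, smul_smul, hεsq ((i : ℕ) + 1), one_smul]
    intro w
    exact LinearMap.ext_iff.mp hB w
  -- conclusion
  have hnab := nab_equiv inn hinnpos nab hkoszul φ hinv hiso hlie
  intro k l hk1 hk2 hl1 hl2
  have h1 : Ric (φ (f k)) (φ (f l)) = Ric (f k) (f l) :=
    ric_equiv nab Ric hRic φ hinv hlie hnab (f k) (f l)
  have h2 : φ (f k) = ε k • f k := by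
    rw [hf k, map_smul, hφe k hk1 hk2, smul_comm]
  have h3 : φ (f l) = ε l • f l := by
    rw [hf l, map_smul, hφe l hl1 hl2, smul_comm]
  rw [h2, h3, ric_smul nab Ric hRic (ε k) (ε l) (f k) (f l)] at h1
  linarith [h1]

/-- On 𝔤(n) with the metric ⟨e_i,e_j⟩ = δ_ij λ_i², the Ricci tensor vanishes
on all off-diagonal pairs (f_i, f_j) with {i,j} ≠ {1,2}. -/
theorem gn_ricci_off_diagonal_vanishes
    (n : ℕ) (hn : 1 ≤ n)
    (a : ℕ → ℝ)
    (hapos : ∀ s, 1 ≤ s → s ≤ n → 0 < a s)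
    (hamono : ∀ s t, 1 ≤ s → s ≤ t → t ≤ n → a s ≤ a t)
    (L : Type) [LieRing L] [LieAlgebra ℝ L] [FiniteDimensional ℝ L]
    (D Z : L) (X Y : ℕ → L)
    (hDX : ∀ s, 1 ≤ s → s ≤ n → ⁅D, X s⁆ = a s • X s)
    (hDY : ∀ s, 1 ≤ s → s ≤ n → ⁅D, Y s⁆ = (-(a s)) • Y s)
    (hXYs : ∀ s, 1 ≤ s → s ≤ n → ⁅X s, Y s⁆ = Z)
    (hDZ : ⁅D, Z⁆ = 0)
    (hXZ : ∀ s, 1 ≤ s → s ≤ n → ⁅X s, Z⁆ = 0)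
    (hYZ : ∀ s, 1 ≤ s → s ≤ n → ⁅Y s, Z⁆ = 0)
    (hXX : ∀ s t, 1 ≤ s → s ≤ n → 1 ≤ t → t ≤ n → ⁅X s, X t⁆ = 0)
    (hYY : ∀ s t, 1 ≤ s → s ≤ n → 1 ≤ t → t ≤ n → ⁅Y s, Y t⁆ = 0)
    (hXYd : ∀ s t, 1 ≤ s → s ≤ n → 1 ≤ t → t ≤ n → s ≠ t → ⁅X s, Y t⁆ = 0)
    (e : ℕ → L)
    (he1 : e 1 = D + Z) (he2 : e 2 = D - Z)
    (heodd : ∀ s, 1 ≤ s → s ≤ n → e (2*s+1) = Real.sqrt (a s) • (X s + Y s))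
    (heeven : ∀ s, 1 ≤ s → s ≤ n → e (2*s+2) = Real.sqrt (a s) • (X s - Y s))
    (b : Module.Basis (Fin (2*n+2)) ℝ L)
    (hb : ∀ i : Fin (2*n+2), b i = e ((i : ℕ) + 1))
    (lam : ℕ → ℝ) (hlam : ∀ i, 1 ≤ i → i ≤ 2*n+2 → lam i ≠ 0)
    (inn : L →ₗ[ℝ] L →ₗ[ℝ] ℝ)
    (hinnsymm : ∀ u v : L, inn u v = inn v u)
    (hinnpos : ∀ v : L, v ≠ 0 → 0 < inn v v)
    (hinne : ∀ i j, 1 ≤ i → i ≤ 2*n+2 → 1 ≤ j → j ≤ 2*n+2 →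
      inn (e i) (e j) = if i = j then (lam i)^2 else 0)
    (f : ℕ → L) (hf : ∀ i, f i = (lam i)⁻¹ • e i)
    (nab : L →ₗ[ℝ] L →ₗ[ℝ] L)
    (hkoszul : ∀ U V W : L, inn (nab U V) W =
      (1/2) * (inn ⁅U, V⁆ W - inn ⁅V, W⁆ U + inn ⁅W, U⁆ V))
    (Ric : L → L → ℝ)
    (hRic : ∀ U V : L, Ric U V = LinearMap.trace ℝ L
      (nab.flip (nab U V) - nab U ∘ₗ nab.flip V
        + nab.flip V ∘ₗ (LieAlgebra.ad ℝ L U : L →ₗ[ℝ] L)))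
    :
    ∀ i j, 1 ≤ i → i ≤ 2*n+2 → 1 ≤ j → j ≤ 2*n+2 → i ≠ j →
      ¬(i = 1 ∧ j = 2) → ¬(i = 2 ∧ j = 1) →
      Ric (f i) (f j) = 0 := by
  intro i j hi1 hi2 hj1 hj2 hij h12 h21
  have key : ∀ ε : ℕ → ℝ, ε 2 = ε 1 → (∀ k, ε k * ε k = 1) →
      (∀ s, 1 ≤ s → s ≤ n → ε (2*s+2) = ε 1 * ε (2*s+1)) → ε i * ε j = -1 →
      Ric (f i) (f j) = 0 := by
    intro ε hε2 hεsq hεb hεij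
    have h := gn_ricci_sign n a hapos L D Z X Y hDX hDY hXYs hDZ hXZ hYZ hXX hYY hXYd
      e he1 he2 heodd heeven b hb lam inn hinnpos hinne f hf nab hkoszul Ric hRic
      ε hε2 hεsq hεb i j hi1 hi2 hj1 hj2
    rw [hεij] at h
    linarith
  by_cases hblk : (i-1)/2 = (j-1)/2
  · -- same block: necessarily both ≥ 3
    have hi3 : 3 ≤ i := by omega
    have hj3 : 3 ≤ j := by omega
    apply key (fun k => if k % 2 = 1 ∧ 3 ≤ k then 1 else -1)
    · split_ifs <;> first | rfl | omega
    · intro k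
      split_ifs <;> norm_num
    · intro s h1 h2
      split_ifs <;> first | omega | norm_num
    · split_ifs <;> first | omega | norm_num
  · -- different blocks
    have hp : ∃ p q, (p = i ∧ q = j ∨ p = j ∧ q = i) ∧ 3 ≤ p ∧ (q-1)/2 ≠ (p-1)/2 := by
      by_cases h3 : 3 ≤ i
      · exact ⟨i, j, Or.inl ⟨rfl, rfl⟩, h3, fun h => hblk h.symm⟩
      · exact ⟨j, i, Or.inr ⟨rfl, rfl⟩, by omega, hblk⟩
    obtain ⟨p, q, hpq, hp3, hq⟩ := hp
    apply key (fun k => if (k-1)/2 = (p-1)/2 then -1 else 1)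
    · split_ifs <;> first | rfl | omega
    · intro k
      split_ifs <;> norm_num
    · intro s h1 h2
      split_ifs <;> first | omega | norm_num
    · rcases hpq with ⟨rfl, rfl⟩ | ⟨rfl, rfl⟩ <;>
        split_ifs <;> first | omega | norm_num
end

section
/- Fix an integer n ≥ 1, reals 0 < a_1 ≤ … ≤ a_n, and a real c ≠ 0, and set K = 4(Σ_{s=1}^n a_s²)·c⁴/a_1². Then the set {−n(t + K/t)·(2/K + a_1²/(2c⁴)) : t ∈ (0,∞)} ⊆ ℝ is infinite. Consequently, among the m-quasi-Einstein metrics on G(n) given by nonzero λ_1,…,λ_{2n+2} with λ_3 = c satisfying λ_{2s+1}² = λ_{2s+2}², λ_{2s+1}²/a_s constant in s, and λ_1² λ_2² = K (all of which have determinant 1 with respect to the orthonormal frame {f_i}), the scalar curvature S = −n(λ_1² + λ_2²)(2/(λ_1²λ_2²) + a_1²/(2c⁴)) takes infinitely many distinct values as λ_1² = t ranges over (0,∞); hence G(n) admits infinitely many non-equivalent non-trivial m-quasi-Einstein metrics for m finite. -/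
/-- The set of scalar curvature values
`S = −n(t + K/t)(2/K + a₁²/(2c⁴))`, as `t = λ₁²` ranges over `(0,∞)` with
`K = 4(Σ a_s²)c⁴/a₁²` fixed, is infinite; hence `G(n)` admits infinitely many
non-equivalent non-trivial m-quasi-Einstein metrics for m finite. -/
theorem gn_infinitely_many_scalar_curvatures
    (n : ℕ) (hn : 1 ≤ n)
    (a : ℕ → ℝ)
    (hapos : ∀ s, 1 ≤ s → s ≤ n → 0 < a s)
    (hamono : ∀ s t, 1 ≤ s → s ≤ t → t ≤ n → a s ≤ a t)
    (c : ℝ) (hc : c ≠ 0)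
    (K : ℝ) (hK : K = 4 * (∑ s ∈ Finset.Icc 1 n, (a s)^2) * c^4 / (a 1)^2) :
    Set.Infinite {x : ℝ | ∃ t : ℝ, 0 < t ∧
      x = -(n : ℝ) * (t + K / t) * (2 / K + (a 1)^2 / (2 * c^4))} := by
  have ha1 : 0 < a 1 := hapos 1 le_rfl hn
  have hc4 : 0 < c ^ 4 := by positivity
  have hsum : 0 < ∑ s ∈ Finset.Icc 1 n, (a s) ^ 2 := by
    apply Finset.sum_pos'
    · intro i _; positivity
    · exact ⟨1, Finset.mem_Icc.mpr ⟨le_rfl, hn⟩, by positivity⟩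
  have hKpos : 0 < K := by rw [hK]; positivity
  set C : ℝ := 2 / K + (a 1) ^ 2 / (2 * c ^ 4) with hC
  have hCpos : 0 < C := by rw [hC]; positivity
  have hnpos : (0 : ℝ) < n := by exact_mod_cast hn
  set b : ℝ := Real.sqrt K + 1 with hb
  have hsq : 0 ≤ Real.sqrt K := Real.sqrt_nonneg K
  have hbpos : (0 : ℝ) < b := by positivity
  have hb2 : K < b ^ 2 := by
    have : Real.sqrt K ^ 2 = K := Real.sq_sqrt hKpos.le
    nlinarith
  set t : ℕ → ℝ := fun k => b * (k + 1) with ht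
  have htpos : ∀ k, 0 < t k := by intro k; simp only [ht]; positivity
  apply Set.infinite_of_injective_forall_mem
    (f := fun k : ℕ => -(n : ℝ) * (t k + K / t k) * C)
  · -- injective
    have hanti : StrictAnti fun k : ℕ => -(n : ℝ) * (t k + K / t k) * C := by
      intro k j hkj
      have htk := htpos k
      have htj := htpos j
      have htkj : t k < t j := by
        simp only [ht]
        have : (k : ℝ) + 1 < (j : ℝ) + 1 := by exact_mod_cast Nat.succ_lt_succ hkj
        nlinarith
      have hprod : K < t k * t j := by
        have hk0 : (0 : ℝ) ≤ (k : ℝ) := Nat.cast_nonneg k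
        have hj0 : (0 : ℝ) ≤ (j : ℝ) := Nat.cast_nonneg j
        have h1 : b ^ 2 ≤ t k * t j := by
          simp only [ht]
          nlinarith [mul_nonneg (sq_nonneg b) hk0, mul_nonneg (sq_nonneg b) hj0,
            mul_nonneg (mul_nonneg (sq_nonneg b) hk0) hj0]
        linarith
      have hdiff : K / t k - K / t j = K * (t j - t k) / (t k * t j) := by
        field_simp
      have key : t k + K / t k < t j + K / t j := by
        have h2 : K * (t j - t k) / (t k * t j) < t j - t k := by
          rw [div_lt_iff₀ (by positivity)]
          nlinarith
        linarith [hdiff ▸ h2]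
      have hnC : 0 < (n : ℝ) * C := by positivity
      show -(n : ℝ) * (t j + K / t j) * C < -(n : ℝ) * (t k + K / t k) * C
      nlinarith [mul_pos hnC (sub_pos.mpr key)]
    exact hanti.injective
  · intro k
    exact ⟨t k, htpos k, rfl⟩
end

section
/- Let 𝔤 = 𝔤(1) be the 4-dimensional real Lie algebra with basis {D, X, Y, Z} and nonzero brackets [D,X] = X, [D,Y] = −Y, [X,Y] = Z, set e_1 = D+Z, e_2 = D−Z, e_3 = X+Y, e_4 = X−Y, and for nonzero reals λ_1, λ_2, λ_3, λ_4 define the inner product ⟨e_i,e_j⟩ = δ_ij λ_i² with f_i = e_i/λ_i. Then there exist m ∈ (0,∞) and λ ∈ ℝ such that, with X₀ = λ_1 f_1 − λ_2 f_2, Ric^m_{X₀}(Y,W) = λ⟨Y,W⟩ for all Y, W ∈ 𝔤, if and only if λ_3² = λ_4² and λ_1² λ_2² = 4λ_4⁴. -/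
set_option maxHeartbeats 4000000 in
/-- On the 4-dimensional quadratic Lie algebra 𝔤(1) (brackets [D,X]=X,
[D,Y]=−Y, [X,Y]=Z), with the metric ⟨e_i,e_j⟩ = δ_ij λ_i², the metric is
m-quasi-Einstein with vector field X₀ = λ₁f₁ − λ₂f₂ for some m ∈ (0,∞) and
λ ∈ ℝ if and only if λ₃² = λ₄² and λ₁²λ₂² = 4λ₄⁴. -/
theorem g1_quasi_einstein_iff
    (L : Type) [LieRing L] [LieAlgebra ℝ L] [FiniteDimensional ℝ L]
    (D X Y Z : L)
    (hDX : ⁅D, X⁆ = X) (hDY : ⁅D, Y⁆ = -Y) (hXY : ⁅X, Y⁆ = Z)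
    (hDZ : ⁅D, Z⁆ = 0) (hXZ : ⁅X, Z⁆ = 0) (hYZ : ⁅Y, Z⁆ = 0)
    (e : ℕ → L)
    (he1 : e 1 = D + Z) (he2 : e 2 = D - Z)
    (he3 : e 3 = X + Y) (he4 : e 4 = X - Y)
    (b : Module.Basis (Fin 4) ℝ L)
    (hb : ∀ i : Fin 4, b i = e ((i : ℕ) + 1))
    (lam : ℕ → ℝ) (hlam : ∀ i, 1 ≤ i → i ≤ 4 → lam i ≠ 0)
    (inn : L →ₗ[ℝ] L →ₗ[ℝ] ℝ)
    (hinnsymm : ∀ u v : L, inn u v = inn v u)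
    (hinnpos : ∀ v : L, v ≠ 0 → 0 < inn v v)
    (hinne : ∀ i j, 1 ≤ i → i ≤ 4 → 1 ≤ j → j ≤ 4 →
      inn (e i) (e j) = if i = j then (lam i)^2 else 0)
    (f : ℕ → L) (hf : ∀ i, f i = (lam i)⁻¹ • e i)
    (nab : L →ₗ[ℝ] L →ₗ[ℝ] L)
    (hkoszul : ∀ U V W : L, inn (nab U V) W =
      (1/2) * (inn ⁅U, V⁆ W - inn ⁅V, W⁆ U + inn ⁅W, U⁆ V))
    (Ric : L → L → ℝ)
    (hRic : ∀ U V : L, Ric U V = LinearMap.trace ℝ L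
      (nab.flip (nab U V) - nab U ∘ₗ nab.flip V
        + nab.flip V ∘ₗ (LieAlgebra.ad ℝ L U : L →ₗ[ℝ] L)))
    (X0 : L) (hX0 : X0 = lam 1 • f 1 - lam 2 • f 2) :
    (∃ m : ℝ, 0 < m ∧ ∃ l : ℝ, ∀ U W : L,
      Ric U W + (1/2) * (inn (nab U X0) W + inn U (nab W X0))
        - (1/m) * (inn X0 U * inn X0 W) = l * inn U W) ↔
    (lam 3^2 = lam 4^2 ∧ lam 1^2 * lam 2^2 = 4 * lam 4^4) := by
  -- nonzero scalars
  have h1 : lam 1 ≠ 0 := hlam 1 le_rfl (by norm_num)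
  have h2 : lam 2 ≠ 0 := hlam 2 (by norm_num) (by norm_num)
  have h3 : lam 3 ≠ 0 := hlam 3 (by norm_num) (by norm_num)
  have h4 : lam 4 ≠ 0 := hlam 4 (by norm_num) (by norm_num)
  have ha : (lam 1)^2 ≠ 0 := pow_ne_zero 2 h1
  have hbb : (lam 2)^2 ≠ 0 := pow_ne_zero 2 h2
  have hcc : (lam 3)^2 ≠ 0 := pow_ne_zero 2 h3
  have hdd : (lam 4)^2 ≠ 0 := pow_ne_zero 2 h4
  -- extra bracket facts
  have hZX : ⁅Z, X⁆ = 0 := by rw [← lie_skew, hXZ, neg_zero]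
  have hZY : ⁅Z, Y⁆ = 0 := by rw [← lie_skew, hYZ, neg_zero]
  have hZD : ⁅Z, D⁆ = 0 := by rw [← lie_skew, hDZ, neg_zero]
  have hXD : ⁅X, D⁆ = -X := by rw [← lie_skew, hDX]
  have hYD : ⁅Y, D⁆ = Y := by rw [← lie_skew, hDY, neg_neg]
  have hYX : ⁅Y, X⁆ = -Z := by rw [← lie_skew, hXY]
  -- brackets among the e i
  have l11 : ⁅e 1, e 1⁆ = 0 := lie_self _
  have l22 : ⁅e 2, e 2⁆ = 0 := lie_self _
  have l33 : ⁅e 3, e 3⁆ = 0 := lie_self _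
  have l44 : ⁅e 4, e 4⁆ = 0 := lie_self _
  have l12 : ⁅e 1, e 2⁆ = 0 := by
    rw [he1, he2]
    simp only [add_lie, lie_add, lie_sub, sub_lie, hDZ, hZD, lie_self]
    abel
  have l21 : ⁅e 2, e 1⁆ = 0 := by rw [← lie_skew, l12, neg_zero]
  have l13 : ⁅e 1, e 3⁆ = e 4 := by
    rw [he1, he3, he4]
    simp only [add_lie, lie_add, hDX, hDY, hZX, hZY]
    abel
  have l31 : ⁅e 3, e 1⁆ = -e 4 := by rw [← lie_skew, l13]
  have l14 : ⁅e 1, e 4⁆ = e 3 := by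
    rw [he1, he3, he4]
    simp only [add_lie, lie_sub, hDX, hDY, hZX, hZY]
    abel
  have l41 : ⁅e 4, e 1⁆ = -e 3 := by rw [← lie_skew, l14]
  have l23 : ⁅e 2, e 3⁆ = e 4 := by
    rw [he2, he3, he4]
    simp only [sub_lie, lie_add, hDX, hDY, hZX, hZY]
    abel
  have l32 : ⁅e 3, e 2⁆ = -e 4 := by rw [← lie_skew, l23]
  have l24 : ⁅e 2, e 4⁆ = e 3 := by
    rw [he2, he3, he4]
    simp only [sub_lie, lie_sub, hDX, hDY, hZX, hZY]
    abel
  have l42 : ⁅e 4, e 2⁆ = -e 3 := by rw [← lie_skew, l24]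
  have l34 : ⁅e 3, e 4⁆ = e 2 - e 1 := by
    rw [he1, he2, he3, he4]
    simp only [add_lie, lie_sub, lie_add, hXY, hYX, lie_self]
    abel
  have l43 : ⁅e 4, e 3⁆ = e 1 - e 2 := by
    rw [← lie_skew, l34]; abel
  -- inner product values
  have i11 : inn (e 1) (e 1) = (lam 1)^2 := by
    rw [hinne 1 1 le_rfl (by norm_num) le_rfl (by norm_num)]; simp
  have i22 : inn (e 2) (e 2) = (lam 2)^2 := by
    rw [hinne 2 2 (by norm_num) (by norm_num) (by norm_num) (by norm_num)]; simp
  have i33 : inn (e 3) (e 3) = (lam 3)^2 := by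
    rw [hinne 3 3 (by norm_num) (by norm_num) (by norm_num) (by norm_num)]; simp
  have i44 : inn (e 4) (e 4) = (lam 4)^2 := by
    rw [hinne 4 4 (by norm_num) (by norm_num) (by norm_num) (by norm_num)]; simp
  have i12 : inn (e 1) (e 2) = 0 := by
    rw [hinne 1 2 (by norm_num) (by norm_num) (by norm_num) (by norm_num)]; simp
  have i13 : inn (e 1) (e 3) = 0 := by
    rw [hinne 1 3 (by norm_num) (by norm_num) (by norm_num) (by norm_num)]; simp
  have i14 : inn (e 1) (e 4) = 0 := by
    rw [hinne 1 4 (by norm_num) (by norm_num) (by norm_num) (by norm_num)]; simp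
  have i23 : inn (e 2) (e 3) = 0 := by
    rw [hinne 2 3 (by norm_num) (by norm_num) (by norm_num) (by norm_num)]; simp
  have i24 : inn (e 2) (e 4) = 0 := by
    rw [hinne 2 4 (by norm_num) (by norm_num) (by norm_num) (by norm_num)]; simp
  have i34 : inn (e 3) (e 4) = 0 := by
    rw [hinne 3 4 (by norm_num) (by norm_num) (by norm_num) (by norm_num)]; simp
  have i21 : inn (e 2) (e 1) = 0 := by rw [hinnsymm, i12]
  have i31 : inn (e 3) (e 1) = 0 := by rw [hinnsymm, i13]
  have i41 : inn (e 4) (e 1) = 0 := by rw [hinnsymm, i14]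
  have i32 : inn (e 3) (e 2) = 0 := by rw [hinnsymm, i23]
  have i42 : inn (e 4) (e 2) = 0 := by rw [hinnsymm, i24]
  have i43 : inn (e 4) (e 3) = 0 := by rw [hinnsymm, i34]
  -- basis facts
  have hb0 : b 0 = e 1 := by rw [hb]; rfl
  have hb1 : b 1 = e 2 := by rw [hb]; rfl
  have hb2 : b 2 = e 3 := by rw [hb]; rfl
  have hb3 : b 3 = e 4 := by rw [hb]; rfl
  -- nondegeneracy
  have ndg : ∀ v : L, inn v (e 1) = 0 → inn v (e 2) = 0 → inn v (e 3) = 0 →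
      inn v (e 4) = 0 → v = 0 := by
    intro v hv1 hv2 hv3 hv4
    by_contra hv
    have hpos := hinnpos v hv
    have : inn v v = 0 := by
      have hexp : inn v v = inn v (∑ i : Fin 4, b.repr v i • b i) := by
        rw [Module.Basis.sum_repr]
      rw [hexp, Fin.sum_univ_four]
      simp only [map_add, map_smul, hb0, hb1, hb2, hb3, hv1, hv2, hv3, hv4,
        smul_eq_mul, mul_zero, add_zero, zero_add]
    linarith
  have eqinn : ∀ v w : L, inn v (e 1) = inn w (e 1) → inn v (e 2) = inn w (e 2) →
      inn v (e 3) = inn w (e 3) → inn v (e 4) = inn w (e 4) → v = w := by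
    intro v w q1 q2 q3 q4
    have := ndg (v - w) (by simp [LinearMap.sub_apply, q1]) (by simp [LinearMap.sub_apply, q2])
      (by simp [LinearMap.sub_apply, q3]) (by simp [LinearMap.sub_apply, q4])
    exact sub_eq_zero.mp this
  have n11 : nab (e 1) (e 1) = (0 : L) := by
    apply eqinn
    all_goals
      simp only [hkoszul, l11, l12, l13, l14, l21, l22, l23, l24, l31, l32, l33, l34,
        l41, l42, l43, l44, map_add, map_sub, map_smul, map_neg, map_zero,
        LinearMap.add_apply, LinearMap.sub_apply, LinearMap.smul_apply,
        LinearMap.neg_apply, LinearMap.zero_apply,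
        i11, i12, i13, i14, i21, i22, i23, i24, i31, i32, i33, i34, i41, i42, i43, i44,
        smul_eq_mul]
      field_simp
      try ring
  have n12 : nab (e 1) (e 2) = (0 : L) := by
    apply eqinn
    all_goals
      simp only [hkoszul, l11, l12, l13, l14, l21, l22, l23, l24, l31, l32, l33, l34,
        l41, l42, l43, l44, map_add, map_sub, map_smul, map_neg, map_zero,
        LinearMap.add_apply, LinearMap.sub_apply, LinearMap.smul_apply,
        LinearMap.neg_apply, LinearMap.zero_apply,
        i11, i12, i13, i14, i21, i22, i23, i24, i31, i32, i33, i34, i41, i42, i43, i44,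
        smul_eq_mul]
      field_simp
      try ring
  have n13 : nab (e 1) (e 3) = ((lam 4 ^ 2 + lam 1 ^ 2 - lam 3 ^ 2) / (2 * lam 4 ^ 2)) • e 4 := by
    apply eqinn
    all_goals
      simp only [hkoszul, l11, l12, l13, l14, l21, l22, l23, l24, l31, l32, l33, l34,
        l41, l42, l43, l44, map_add, map_sub, map_smul, map_neg, map_zero,
        LinearMap.add_apply, LinearMap.sub_apply, LinearMap.smul_apply,
        LinearMap.neg_apply, LinearMap.zero_apply,
        i11, i12, i13, i14, i21, i22, i23, i24, i31, i32, i33, i34, i41, i42, i43, i44,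
        smul_eq_mul]
      field_simp
      try ring
  have n14 : nab (e 1) (e 4) = ((lam 3 ^ 2 - lam 1 ^ 2 - lam 4 ^ 2) / (2 * lam 3 ^ 2)) • e 3 := by
    apply eqinn
    all_goals
      simp only [hkoszul, l11, l12, l13, l14, l21, l22, l23, l24, l31, l32, l33, l34,
        l41, l42, l43, l44, map_add, map_sub, map_smul, map_neg, map_zero,
        LinearMap.add_apply, LinearMap.sub_apply, LinearMap.smul_apply,
        LinearMap.neg_apply, LinearMap.zero_apply,
        i11, i12, i13, i14, i21, i22, i23, i24, i31, i32, i33, i34, i41, i42, i43, i44,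
        smul_eq_mul]
      field_simp
      try ring
  have n21 : nab (e 2) (e 1) = (0 : L) := by
    apply eqinn
    all_goals
      simp only [hkoszul, l11, l12, l13, l14, l21, l22, l23, l24, l31, l32, l33, l34,
        l41, l42, l43, l44, map_add, map_sub, map_smul, map_neg, map_zero,
        LinearMap.add_apply, LinearMap.sub_apply, LinearMap.smul_apply,
        LinearMap.neg_apply, LinearMap.zero_apply,
        i11, i12, i13, i14, i21, i22, i23, i24, i31, i32, i33, i34, i41, i42, i43, i44,
        smul_eq_mul]
      field_simp
      try ring
  have n22 : nab (e 2) (e 2) = (0 : L) := by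
    apply eqinn
    all_goals
      simp only [hkoszul, l11, l12, l13, l14, l21, l22, l23, l24, l31, l32, l33, l34,
        l41, l42, l43, l44, map_add, map_sub, map_smul, map_neg, map_zero,
        LinearMap.add_apply, LinearMap.sub_apply, LinearMap.smul_apply,
        LinearMap.neg_apply, LinearMap.zero_apply,
        i11, i12, i13, i14, i21, i22, i23, i24, i31, i32, i33, i34, i41, i42, i43, i44,
        smul_eq_mul]
      field_simp
      try ring
  have n23 : nab (e 2) (e 3) = ((lam 4 ^ 2 - lam 2 ^ 2 - lam 3 ^ 2) / (2 * lam 4 ^ 2)) • e 4 := by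
    apply eqinn
    all_goals
      simp only [hkoszul, l11, l12, l13, l14, l21, l22, l23, l24, l31, l32, l33, l34,
        l41, l42, l43, l44, map_add, map_sub, map_smul, map_neg, map_zero,
        LinearMap.add_apply, LinearMap.sub_apply, LinearMap.smul_apply,
        LinearMap.neg_apply, LinearMap.zero_apply,
        i11, i12, i13, i14, i21, i22, i23, i24, i31, i32, i33, i34, i41, i42, i43, i44,
        smul_eq_mul]
      field_simp
      try ring
  have n24 : nab (e 2) (e 4) = ((lam 3 ^ 2 + lam 2 ^ 2 - lam 4 ^ 2) / (2 * lam 3 ^ 2)) • e 3 := by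
    apply eqinn
    all_goals
      simp only [hkoszul, l11, l12, l13, l14, l21, l22, l23, l24, l31, l32, l33, l34,
        l41, l42, l43, l44, map_add, map_sub, map_smul, map_neg, map_zero,
        LinearMap.add_apply, LinearMap.sub_apply, LinearMap.smul_apply,
        LinearMap.neg_apply, LinearMap.zero_apply,
        i11, i12, i13, i14, i21, i22, i23, i24, i31, i32, i33, i34, i41, i42, i43, i44,
        smul_eq_mul]
      field_simp
      try ring
  have n31 : nab (e 3) (e 1) = ((lam 1 ^ 2 - lam 3 ^ 2 - lam 4 ^ 2) / (2 * lam 4 ^ 2)) • e 4 := by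
    apply eqinn
    all_goals
      simp only [hkoszul, l11, l12, l13, l14, l21, l22, l23, l24, l31, l32, l33, l34,
        l41, l42, l43, l44, map_add, map_sub, map_smul, map_neg, map_zero,
        LinearMap.add_apply, LinearMap.sub_apply, LinearMap.smul_apply,
        LinearMap.neg_apply, LinearMap.zero_apply,
        i11, i12, i13, i14, i21, i22, i23, i24, i31, i32, i33, i34, i41, i42, i43, i44,
        smul_eq_mul]
      field_simp
      try ring
  have n32 : nab (e 3) (e 2) = ((-(lam 2 ^ 2 + lam 3 ^ 2 + lam 4 ^ 2)) / (2 * lam 4 ^ 2)) • e 4 := by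
    apply eqinn
    all_goals
      simp only [hkoszul, l11, l12, l13, l14, l21, l22, l23, l24, l31, l32, l33, l34,
        l41, l42, l43, l44, map_add, map_sub, map_smul, map_neg, map_zero,
        LinearMap.add_apply, LinearMap.sub_apply, LinearMap.smul_apply,
        LinearMap.neg_apply, LinearMap.zero_apply,
        i11, i12, i13, i14, i21, i22, i23, i24, i31, i32, i33, i34, i41, i42, i43, i44,
        smul_eq_mul]
      field_simp
      try ring
  have n33 : nab (e 3) (e 3) = (0 : L) := by
    apply eqinn
    all_goals
      simp only [hkoszul, l11, l12, l13, l14, l21, l22, l23, l24, l31, l32, l33, l34,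
        l41, l42, l43, l44, map_add, map_sub, map_smul, map_neg, map_zero,
        LinearMap.add_apply, LinearMap.sub_apply, LinearMap.smul_apply,
        LinearMap.neg_apply, LinearMap.zero_apply,
        i11, i12, i13, i14, i21, i22, i23, i24, i31, i32, i33, i34, i41, i42, i43, i44,
        smul_eq_mul]
      field_simp
      try ring
  have n34 : nab (e 3) (e 4) = ((lam 3 ^ 2 + lam 4 ^ 2 - lam 1 ^ 2) / (2 * lam 1 ^ 2)) • e 1 + ((lam 2 ^ 2 + lam 3 ^ 2 + lam 4 ^ 2) / (2 * lam 2 ^ 2)) • e 2 := by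
    apply eqinn
    all_goals
      simp only [hkoszul, l11, l12, l13, l14, l21, l22, l23, l24, l31, l32, l33, l34,
        l41, l42, l43, l44, map_add, map_sub, map_smul, map_neg, map_zero,
        LinearMap.add_apply, LinearMap.sub_apply, LinearMap.smul_apply,
        LinearMap.neg_apply, LinearMap.zero_apply,
        i11, i12, i13, i14, i21, i22, i23, i24, i31, i32, i33, i34, i41, i42, i43, i44,
        smul_eq_mul]
      field_simp
      try ring
  have n41 : nab (e 4) (e 1) = ((-(lam 1 ^ 2 + lam 3 ^ 2 + lam 4 ^ 2)) / (2 * lam 3 ^ 2)) • e 3 := by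
    apply eqinn
    all_goals
      simp only [hkoszul, l11, l12, l13, l14, l21, l22, l23, l24, l31, l32, l33, l34,
        l41, l42, l43, l44, map_add, map_sub, map_smul, map_neg, map_zero,
        LinearMap.add_apply, LinearMap.sub_apply, LinearMap.smul_apply,
        LinearMap.neg_apply, LinearMap.zero_apply,
        i11, i12, i13, i14, i21, i22, i23, i24, i31, i32, i33, i34, i41, i42, i43, i44,
        smul_eq_mul]
      field_simp
      try ring
  have n42 : nab (e 4) (e 2) = ((lam 2 ^ 2 - lam 3 ^ 2 - lam 4 ^ 2) / (2 * lam 3 ^ 2)) • e 3 := by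
    apply eqinn
    all_goals
      simp only [hkoszul, l11, l12, l13, l14, l21, l22, l23, l24, l31, l32, l33, l34,
        l41, l42, l43, l44, map_add, map_sub, map_smul, map_neg, map_zero,
        LinearMap.add_apply, LinearMap.sub_apply, LinearMap.smul_apply,
        LinearMap.neg_apply, LinearMap.zero_apply,
        i11, i12, i13, i14, i21, i22, i23, i24, i31, i32, i33, i34, i41, i42, i43, i44,
        smul_eq_mul]
      field_simp
      try ring
  have n43 : nab (e 4) (e 3) = ((lam 1 ^ 2 + lam 3 ^ 2 + lam 4 ^ 2) / (2 * lam 1 ^ 2)) • e 1 + ((lam 3 ^ 2 + lam 4 ^ 2 - lam 2 ^ 2) / (2 * lam 2 ^ 2)) • e 2 := by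
    apply eqinn
    all_goals
      simp only [hkoszul, l11, l12, l13, l14, l21, l22, l23, l24, l31, l32, l33, l34,
        l41, l42, l43, l44, map_add, map_sub, map_smul, map_neg, map_zero,
        LinearMap.add_apply, LinearMap.sub_apply, LinearMap.smul_apply,
        LinearMap.neg_apply, LinearMap.zero_apply,
        i11, i12, i13, i14, i21, i22, i23, i24, i31, i32, i33, i34, i41, i42, i43, i44,
        smul_eq_mul]
      field_simp
      try ring
  have n44 : nab (e 4) (e 4) = (0 : L) := by
    apply eqinn
    all_goals
      simp only [hkoszul, l11, l12, l13, l14, l21, l22, l23, l24, l31, l32, l33, l34,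
        l41, l42, l43, l44, map_add, map_sub, map_smul, map_neg, map_zero,
        LinearMap.add_apply, LinearMap.sub_apply, LinearMap.smul_apply,
        LinearMap.neg_apply, LinearMap.zero_apply,
        i11, i12, i13, i14, i21, i22, i23, i24, i31, i32, i33, i34, i41, i42, i43, i44,
        smul_eq_mul]
      field_simp
      try ring
  -- X0
  have hX0e : X0 = e 1 - e 2 := by
    rw [hX0, hf, hf, smul_smul, smul_smul, mul_inv_cancel₀ h1, mul_inv_cancel₀ h2,
      one_smul, one_smul]
  have nX1 : nab (e 1) X0 = 0 := by
    rw [hX0e, map_sub, n11, n12]; simp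
  have nX2 : nab (e 2) X0 = 0 := by
    rw [hX0e, map_sub, n21, n22]; simp
  have nX3 : nab (e 3) X0 = ((lam 1 ^ 2 + lam 2 ^ 2) / (2 * lam 4 ^ 2)) • e 4 := by
    rw [hX0e, map_sub, n31, n32, ← sub_smul]
    congr 1
    field_simp
    try ring
  have nX4 : nab (e 4) X0 = (-(lam 1 ^ 2 + lam 2 ^ 2) / (2 * lam 3 ^ 2)) • e 3 := by
    rw [hX0e, map_sub, n41, n42, ← sub_smul]
    congr 1
    field_simp
    try ring
  -- repr via inner products
  have rp : ∀ v : L, (b.repr v 0 = (lam 1 ^ 2)⁻¹ * inn v (e 1) ∧ b.repr v 1 = (lam 2 ^ 2)⁻¹ * inn v (e 2))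
      ∧ (b.repr v 2 = (lam 3 ^ 2)⁻¹ * inn v (e 3) ∧ b.repr v 3 = (lam 4 ^ 2)⁻¹ * inn v (e 4)) := by
    intro v
    have hv : ∀ w : L, inn v w = inn (∑ i : Fin 4, b.repr v i • b i) w := by
      intro w; rw [Module.Basis.sum_repr]
    refine ⟨⟨?_, ?_⟩, ?_, ?_⟩ <;>
    · rw [hv]
      rw [Fin.sum_univ_four]
      simp only [map_add, map_smul, LinearMap.add_apply, LinearMap.smul_apply,
        hb0, hb1, hb2, hb3, i11, i12, i13, i14, i21, i22, i23, i24, i31, i32, i33, i34,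
        i41, i42, i43, i44, smul_eq_mul]
      field_simp
      ring
  have trace_formula : ∀ T : L →ₗ[ℝ] L, LinearMap.trace ℝ L T =
      (lam 1 ^ 2)⁻¹ * inn (T (e 1)) (e 1) + (lam 2 ^ 2)⁻¹ * inn (T (e 2)) (e 2)
      + (lam 3 ^ 2)⁻¹ * inn (T (e 3)) (e 3) + (lam 4 ^ 2)⁻¹ * inn (T (e 4)) (e 4) := by
    intro T
    rw [LinearMap.trace_eq_matrix_trace ℝ b, Matrix.trace, Fin.sum_univ_four]
    simp only [Matrix.diag_apply, LinearMap.toMatrix_apply, hb0, hb1, hb2, hb3,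
      (rp _).1.1, (rp _).1.2, (rp _).2.1, (rp _).2.2]
  have R11 : Ric (e 1) (e 1) = (lam 1 ^ 2 * lam 1 ^ 2 - (lam 3 ^ 2 + lam 4 ^ 2) * (lam 3 ^ 2 + lam 4 ^ 2)) / (2 * lam 3 ^ 2 * lam 4 ^ 2) := by
    rw [hRic, trace_formula]
    simp only [LinearMap.add_apply, LinearMap.sub_apply, LinearMap.comp_apply,
      LinearMap.flip_apply, LieAlgebra.ad_apply,
      l11, l12, l13, l14, l21, l22, l23, l24, l31, l32, l33, l34, l41, l42, l43, l44,
      n11, n12, n13, n14, n21, n22, n23, n24, n31, n32, n33, n34, n41, n42, n43, n44,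
      map_add, map_sub, map_smul, map_neg, map_zero,
      LinearMap.neg_apply, LinearMap.zero_apply, LinearMap.smul_apply,
      i11, i12, i13, i14, i21, i22, i23, i24, i31, i32, i33, i34, i41, i42, i43, i44,
      smul_eq_mul]
    field_simp
    try ring
  have R12 : Ric (e 1) (e 2) = (-(lam 1 ^ 2 * lam 2 ^ 2 + (lam 3 ^ 2 + lam 4 ^ 2) * (lam 3 ^ 2 + lam 4 ^ 2))) / (2 * lam 3 ^ 2 * lam 4 ^ 2) := by
    rw [hRic, trace_formula]
    simp only [LinearMap.add_apply, LinearMap.sub_apply, LinearMap.comp_apply,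
      LinearMap.flip_apply, LieAlgebra.ad_apply,
      l11, l12, l13, l14, l21, l22, l23, l24, l31, l32, l33, l34, l41, l42, l43, l44,
      n11, n12, n13, n14, n21, n22, n23, n24, n31, n32, n33, n34, n41, n42, n43, n44,
      map_add, map_sub, map_smul, map_neg, map_zero,
      LinearMap.neg_apply, LinearMap.zero_apply, LinearMap.smul_apply,
      i11, i12, i13, i14, i21, i22, i23, i24, i31, i32, i33, i34, i41, i42, i43, i44,
      smul_eq_mul]
    field_simp
    try ring
  have R13 : Ric (e 1) (e 3) = (0 : ℝ) := by
    rw [hRic, trace_formula]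
    simp only [LinearMap.add_apply, LinearMap.sub_apply, LinearMap.comp_apply,
      LinearMap.flip_apply, LieAlgebra.ad_apply,
      l11, l12, l13, l14, l21, l22, l23, l24, l31, l32, l33, l34, l41, l42, l43, l44,
      n11, n12, n13, n14, n21, n22, n23, n24, n31, n32, n33, n34, n41, n42, n43, n44,
      map_add, map_sub, map_smul, map_neg, map_zero,
      LinearMap.neg_apply, LinearMap.zero_apply, LinearMap.smul_apply,
      i11, i12, i13, i14, i21, i22, i23, i24, i31, i32, i33, i34, i41, i42, i43, i44,
      smul_eq_mul]
    field_simp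
    try ring
  have R14 : Ric (e 1) (e 4) = (0 : ℝ) := by
    rw [hRic, trace_formula]
    simp only [LinearMap.add_apply, LinearMap.sub_apply, LinearMap.comp_apply,
      LinearMap.flip_apply, LieAlgebra.ad_apply,
      l11, l12, l13, l14, l21, l22, l23, l24, l31, l32, l33, l34, l41, l42, l43, l44,
      n11, n12, n13, n14, n21, n22, n23, n24, n31, n32, n33, n34, n41, n42, n43, n44,
      map_add, map_sub, map_smul, map_neg, map_zero,
      LinearMap.neg_apply, LinearMap.zero_apply, LinearMap.smul_apply,
      i11, i12, i13, i14, i21, i22, i23, i24, i31, i32, i33, i34, i41, i42, i43, i44,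
      smul_eq_mul]
    field_simp
    try ring
  have R21 : Ric (e 2) (e 1) = (-(lam 1 ^ 2 * lam 2 ^ 2 + (lam 3 ^ 2 + lam 4 ^ 2) * (lam 3 ^ 2 + lam 4 ^ 2))) / (2 * lam 3 ^ 2 * lam 4 ^ 2) := by
    rw [hRic, trace_formula]
    simp only [LinearMap.add_apply, LinearMap.sub_apply, LinearMap.comp_apply,
      LinearMap.flip_apply, LieAlgebra.ad_apply,
      l11, l12, l13, l14, l21, l22, l23, l24, l31, l32, l33, l34, l41, l42, l43, l44,
      n11, n12, n13, n14, n21, n22, n23, n24, n31, n32, n33, n34, n41, n42, n43, n44,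
      map_add, map_sub, map_smul, map_neg, map_zero,
      LinearMap.neg_apply, LinearMap.zero_apply, LinearMap.smul_apply,
      i11, i12, i13, i14, i21, i22, i23, i24, i31, i32, i33, i34, i41, i42, i43, i44,
      smul_eq_mul]
    field_simp
    try ring
  have R22 : Ric (e 2) (e 2) = (lam 2 ^ 2 * lam 2 ^ 2 - (lam 3 ^ 2 + lam 4 ^ 2) * (lam 3 ^ 2 + lam 4 ^ 2)) / (2 * lam 3 ^ 2 * lam 4 ^ 2) := by
    rw [hRic, trace_formula]
    simp only [LinearMap.add_apply, LinearMap.sub_apply, LinearMap.comp_apply,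
      LinearMap.flip_apply, LieAlgebra.ad_apply,
      l11, l12, l13, l14, l21, l22, l23, l24, l31, l32, l33, l34, l41, l42, l43, l44,
      n11, n12, n13, n14, n21, n22, n23, n24, n31, n32, n33, n34, n41, n42, n43, n44,
      map_add, map_sub, map_smul, map_neg, map_zero,
      LinearMap.neg_apply, LinearMap.zero_apply, LinearMap.smul_apply,
      i11, i12, i13, i14, i21, i22, i23, i24, i31, i32, i33, i34, i41, i42, i43, i44,
      smul_eq_mul]
    field_simp
    try ring
  have R23 : Ric (e 2) (e 3) = (0 : ℝ) := by
    rw [hRic, trace_formula]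
    simp only [LinearMap.add_apply, LinearMap.sub_apply, LinearMap.comp_apply,
      LinearMap.flip_apply, LieAlgebra.ad_apply,
      l11, l12, l13, l14, l21, l22, l23, l24, l31, l32, l33, l34, l41, l42, l43, l44,
      n11, n12, n13, n14, n21, n22, n23, n24, n31, n32, n33, n34, n41, n42, n43, n44,
      map_add, map_sub, map_smul, map_neg, map_zero,
      LinearMap.neg_apply, LinearMap.zero_apply, LinearMap.smul_apply,
      i11, i12, i13, i14, i21, i22, i23, i24, i31, i32, i33, i34, i41, i42, i43, i44,
      smul_eq_mul]
    field_simp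
    try ring
  have R24 : Ric (e 2) (e 4) = (0 : ℝ) := by
    rw [hRic, trace_formula]
    simp only [LinearMap.add_apply, LinearMap.sub_apply, LinearMap.comp_apply,
      LinearMap.flip_apply, LieAlgebra.ad_apply,
      l11, l12, l13, l14, l21, l22, l23, l24, l31, l32, l33, l34, l41, l42, l43, l44,
      n11, n12, n13, n14, n21, n22, n23, n24, n31, n32, n33, n34, n41, n42, n43, n44,
      map_add, map_sub, map_smul, map_neg, map_zero,
      LinearMap.neg_apply, LinearMap.zero_apply, LinearMap.smul_apply,
      i11, i12, i13, i14, i21, i22, i23, i24, i31, i32, i33, i34, i41, i42, i43, i44,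
      smul_eq_mul]
    field_simp
    try ring
  have R31 : Ric (e 3) (e 1) = (0 : ℝ) := by
    rw [hRic, trace_formula]
    simp only [LinearMap.add_apply, LinearMap.sub_apply, LinearMap.comp_apply,
      LinearMap.flip_apply, LieAlgebra.ad_apply,
      l11, l12, l13, l14, l21, l22, l23, l24, l31, l32, l33, l34, l41, l42, l43, l44,
      n11, n12, n13, n14, n21, n22, n23, n24, n31, n32, n33, n34, n41, n42, n43, n44,
      map_add, map_sub, map_smul, map_neg, map_zero,
      LinearMap.neg_apply, LinearMap.zero_apply, LinearMap.smul_apply,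
      i11, i12, i13, i14, i21, i22, i23, i24, i31, i32, i33, i34, i41, i42, i43, i44,
      smul_eq_mul]
    field_simp
    try ring
  have R32 : Ric (e 3) (e 2) = (0 : ℝ) := by
    rw [hRic, trace_formula]
    simp only [LinearMap.add_apply, LinearMap.sub_apply, LinearMap.comp_apply,
      LinearMap.flip_apply, LieAlgebra.ad_apply,
      l11, l12, l13, l14, l21, l22, l23, l24, l31, l32, l33, l34, l41, l42, l43, l44,
      n11, n12, n13, n14, n21, n22, n23, n24, n31, n32, n33, n34, n41, n42, n43, n44,
      map_add, map_sub, map_smul, map_neg, map_zero,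
      LinearMap.neg_apply, LinearMap.zero_apply, LinearMap.smul_apply,
      i11, i12, i13, i14, i21, i22, i23, i24, i31, i32, i33, i34, i41, i42, i43, i44,
      smul_eq_mul]
    field_simp
    try ring
  have R33 : Ric (e 3) (e 3) = ((lam 1 ^ 2 + lam 2 ^ 2) * (lam 3 ^ 2 * lam 3 ^ 2 - lam 4 ^ 2 * lam 4 ^ 2 - lam 1 ^ 2 * lam 2 ^ 2)) / (2 * lam 1 ^ 2 * lam 2 ^ 2 * lam 4 ^ 2) := by
    rw [hRic, trace_formula]
    simp only [LinearMap.add_apply, LinearMap.sub_apply, LinearMap.comp_apply,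
      LinearMap.flip_apply, LieAlgebra.ad_apply,
      l11, l12, l13, l14, l21, l22, l23, l24, l31, l32, l33, l34, l41, l42, l43, l44,
      n11, n12, n13, n14, n21, n22, n23, n24, n31, n32, n33, n34, n41, n42, n43, n44,
      map_add, map_sub, map_smul, map_neg, map_zero,
      LinearMap.neg_apply, LinearMap.zero_apply, LinearMap.smul_apply,
      i11, i12, i13, i14, i21, i22, i23, i24, i31, i32, i33, i34, i41, i42, i43, i44,
      smul_eq_mul]
    field_simp
    try ring
  have R34 : Ric (e 3) (e 4) = (0 : ℝ) := by
    rw [hRic, trace_formula]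
    simp only [LinearMap.add_apply, LinearMap.sub_apply, LinearMap.comp_apply,
      LinearMap.flip_apply, LieAlgebra.ad_apply,
      l11, l12, l13, l14, l21, l22, l23, l24, l31, l32, l33, l34, l41, l42, l43, l44,
      n11, n12, n13, n14, n21, n22, n23, n24, n31, n32, n33, n34, n41, n42, n43, n44,
      map_add, map_sub, map_smul, map_neg, map_zero,
      LinearMap.neg_apply, LinearMap.zero_apply, LinearMap.smul_apply,
      i11, i12, i13, i14, i21, i22, i23, i24, i31, i32, i33, i34, i41, i42, i43, i44,
      smul_eq_mul]
    field_simp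
    try ring
  have R41 : Ric (e 4) (e 1) = (0 : ℝ) := by
    rw [hRic, trace_formula]
    simp only [LinearMap.add_apply, LinearMap.sub_apply, LinearMap.comp_apply,
      LinearMap.flip_apply, LieAlgebra.ad_apply,
      l11, l12, l13, l14, l21, l22, l23, l24, l31, l32, l33, l34, l41, l42, l43, l44,
      n11, n12, n13, n14, n21, n22, n23, n24, n31, n32, n33, n34, n41, n42, n43, n44,
      map_add, map_sub, map_smul, map_neg, map_zero,
      LinearMap.neg_apply, LinearMap.zero_apply, LinearMap.smul_apply,
      i11, i12, i13, i14, i21, i22, i23, i24, i31, i32, i33, i34, i41, i42, i43, i44,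
      smul_eq_mul]
    field_simp
    try ring
  have R42 : Ric (e 4) (e 2) = (0 : ℝ) := by
    rw [hRic, trace_formula]
    simp only [LinearMap.add_apply, LinearMap.sub_apply, LinearMap.comp_apply,
      LinearMap.flip_apply, LieAlgebra.ad_apply,
      l11, l12, l13, l14, l21, l22, l23, l24, l31, l32, l33, l34, l41, l42, l43, l44,
      n11, n12, n13, n14, n21, n22, n23, n24, n31, n32, n33, n34, n41, n42, n43, n44,
      map_add, map_sub, map_smul, map_neg, map_zero,
      LinearMap.neg_apply, LinearMap.zero_apply, LinearMap.smul_apply,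
      i11, i12, i13, i14, i21, i22, i23, i24, i31, i32, i33, i34, i41, i42, i43, i44,
      smul_eq_mul]
    field_simp
    try ring
  have R43 : Ric (e 4) (e 3) = (0 : ℝ) := by
    rw [hRic, trace_formula]
    simp only [LinearMap.add_apply, LinearMap.sub_apply, LinearMap.comp_apply,
      LinearMap.flip_apply, LieAlgebra.ad_apply,
      l11, l12, l13, l14, l21, l22, l23, l24, l31, l32, l33, l34, l41, l42, l43, l44,
      n11, n12, n13, n14, n21, n22, n23, n24, n31, n32, n33, n34, n41, n42, n43, n44,
      map_add, map_sub, map_smul, map_neg, map_zero,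
      LinearMap.neg_apply, LinearMap.zero_apply, LinearMap.smul_apply,
      i11, i12, i13, i14, i21, i22, i23, i24, i31, i32, i33, i34, i41, i42, i43, i44,
      smul_eq_mul]
    field_simp
    try ring
  have R44 : Ric (e 4) (e 4) = ((lam 1 ^ 2 + lam 2 ^ 2) * (lam 4 ^ 2 * lam 4 ^ 2 - lam 3 ^ 2 * lam 3 ^ 2 - lam 1 ^ 2 * lam 2 ^ 2)) / (2 * lam 1 ^ 2 * lam 2 ^ 2 * lam 3 ^ 2) := by
    rw [hRic, trace_formula]
    simp only [LinearMap.add_apply, LinearMap.sub_apply, LinearMap.comp_apply,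
      LinearMap.flip_apply, LieAlgebra.ad_apply,
      l11, l12, l13, l14, l21, l22, l23, l24, l31, l32, l33, l34, l41, l42, l43, l44,
      n11, n12, n13, n14, n21, n22, n23, n24, n31, n32, n33, n34, n41, n42, n43, n44,
      map_add, map_sub, map_smul, map_neg, map_zero,
      LinearMap.neg_apply, LinearMap.zero_apply, LinearMap.smul_apply,
      i11, i12, i13, i14, i21, i22, i23, i24, i31, i32, i33, i34, i41, i42, i43, i44,
      smul_eq_mul]
    field_simp
    try ring
  have iX1 : inn X0 (e 1) = lam 1 ^ 2 := by
    rw [hX0e, map_sub]; simp only [LinearMap.sub_apply, i11, i21]; ring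
  have iX2 : inn X0 (e 2) = -(lam 2 ^ 2) := by
    rw [hX0e, map_sub]; simp only [LinearMap.sub_apply, i12, i22]; ring
  have iX3 : inn X0 (e 3) = 0 := by
    rw [hX0e, map_sub]; simp only [LinearMap.sub_apply, i13, i23]; ring
  have iX4 : inn X0 (e 4) = 0 := by
    rw [hX0e, map_sub]; simp only [LinearMap.sub_apply, i14, i24]; ring
  constructor
  · rintro ⟨m, hm, l, H⟩
    have hm0 : m ≠ 0 := ne_of_gt hm
    have E11 := H (e 1) (e 1)
    have E12 := H (e 1) (e 2)
    have E33 := H (e 3) (e 3)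
    have E44 := H (e 4) (e 4)
    simp only [R11, R12, R33, R44, nX1, nX2, nX3, nX4, iX1, iX2, iX3, iX4,
      i11, i12, i13, i14, i21, i22, i23, i24, i31, i32, i33, i34, i41, i42, i43, i44,
      map_zero, map_smul, LinearMap.zero_apply, LinearMap.smul_apply, smul_eq_mul,
      LinearMap.map_smul] at E11 E12 E33 E44
    field_simp at E11 E12 E33 E44
    have hA : 0 < lam 1 ^ 2 := lt_of_le_of_ne (sq_nonneg _) (Ne.symm ha)
    have hB : 0 < lam 2 ^ 2 := lt_of_le_of_ne (sq_nonneg _) (Ne.symm hbb)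
    have hC : 0 < lam 3 ^ 2 := lt_of_le_of_ne (sq_nonneg _) (Ne.symm hcc)
    have hD : 0 < lam 4 ^ 2 := lt_of_le_of_ne (sq_nonneg _) (Ne.symm hdd)
    have h0 : (lam 1 ^ 2 + lam 2 ^ 2) *
        (lam 3 ^ 2 * lam 3 ^ 2 - lam 4 ^ 2 * lam 4 ^ 2) = 0 := by
      have h0' : m * ((lam 1 ^ 2 + lam 2 ^ 2) *
          (lam 3 ^ 2 * lam 3 ^ 2 - lam 4 ^ 2 * lam 4 ^ 2)) = 0 := by
        linear_combination (E33 - E44) / 4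
      exact (mul_eq_zero.mp h0').resolve_left hm0
    have hCD : lam 3 ^ 2 = lam 4 ^ 2 := by
      rcases mul_eq_zero.mp h0 with h | h
      · linarith
      · have h' : (lam 3 ^ 2 - lam 4 ^ 2) * (lam 3 ^ 2 + lam 4 ^ 2) = 0 := by
          linear_combination h
        rcases mul_eq_zero.mp h' with h'' | h''
        · linarith
        · linarith
    refine ⟨hCD, ?_⟩
    rw [hCD] at E11 E12 E33
    have hkey : (lam 1 ^ 2 + lam 2 ^ 2) *
        (lam 1 ^ 2 * lam 2 ^ 2 - 4 * (lam 4 ^ 2 * lam 4 ^ 2)) *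
        (2 * lam 1 ^ 2 * (lam 4 ^ 2 * lam 4 ^ 2)) = 0 := by
      have e33' : (lam 1 ^ 2 + lam 2 ^ 2) + 2 * (lam 4 ^ 2 * lam 4 ^ 2) * l = 0 := by
        have hm3 : (m * (lam 1 ^ 2 * lam 2 ^ 2)) *
            ((lam 1 ^ 2 + lam 2 ^ 2) + 2 * (lam 4 ^ 2 * lam 4 ^ 2) * l) = 0 := by
          linear_combination -(E33 - 2 * m * (lam 1 ^ 2 + lam 2 ^ 2)
            * (lam 3 ^ 2 + lam 4 ^ 2) * hCD) / 2
        exact (mul_eq_zero.mp hm3).resolve_left (mul_ne_zero hm0 (mul_ne_zero ha hbb))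
      linear_combination (lam 1 ^ 2 * lam 2 ^ 2 + 4 * (lam 4 ^ 2 * lam 4 ^ 2))
          * (E11 + lam 1 ^ 2 * m * e33')
        + (2 * lam 1 ^ 2 * lam 1 ^ 2 + lam 1 ^ 2 * lam 2 ^ 2 - 4 * (lam 4 ^ 2 * lam 4 ^ 2)) * E12
    have h44 : lam 4 ^ 4 = lam 4 ^ 2 * lam 4 ^ 2 := by ring
    rcases mul_eq_zero.mp hkey with h | h
    · rcases mul_eq_zero.mp h with h' | h'
      · linarith
      · rw [h44]; linarith
    · have hpos := mul_pos (mul_pos two_pos hA) (mul_pos hD hD)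
      linarith
  · rintro ⟨hc, hab⟩
    have hD : 0 < lam 4 ^ 2 := lt_of_le_of_ne (sq_nonneg _) (Ne.symm hdd)
    -- bilinearity of Ric
    have Ricaddl : ∀ U U' V : L, Ric (U + U') V = Ric U V + Ric U' V := by
      intro U U' V
      have hop : (nab.flip (nab (U + U') V) - nab (U + U') ∘ₗ nab.flip V
          + nab.flip V ∘ₗ (LieAlgebra.ad ℝ L (U + U') : L →ₗ[ℝ] L))
          = (nab.flip (nab U V) - nab U ∘ₗ nab.flip V
          + nab.flip V ∘ₗ (LieAlgebra.ad ℝ L U : L →ₗ[ℝ] L))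
          + (nab.flip (nab U' V) - nab U' ∘ₗ nab.flip V
          + nab.flip V ∘ₗ (LieAlgebra.ad ℝ L U' : L →ₗ[ℝ] L)) := by
        ext v
        simp only [LinearMap.add_apply, LinearMap.sub_apply, LinearMap.comp_apply,
          LinearMap.flip_apply, LieAlgebra.ad_apply, map_add, LinearMap.add_apply,
          add_lie]
        abel
      rw [hRic, hRic, hRic, hop, map_add]
    have Ricsmull : ∀ (s : ℝ) (U V : L), Ric (s • U) V = s * Ric U V := by
      intro s U V
      have hop : (nab.flip (nab (s • U) V) - nab (s • U) ∘ₗ nab.flip V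
          + nab.flip V ∘ₗ (LieAlgebra.ad ℝ L (s • U) : L →ₗ[ℝ] L))
          = s • (nab.flip (nab U V) - nab U ∘ₗ nab.flip V
          + nab.flip V ∘ₗ (LieAlgebra.ad ℝ L U : L →ₗ[ℝ] L)) := by
        ext v
        simp only [LinearMap.add_apply, LinearMap.sub_apply, LinearMap.comp_apply,
          LinearMap.flip_apply, LieAlgebra.ad_apply, map_smul, LinearMap.smul_apply,
          smul_lie]
        module
      rw [hRic, hRic, hop, map_smul, smul_eq_mul]
    have Ricaddr : ∀ U V V' : L, Ric U (V + V') = Ric U V + Ric U V' := by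
      intro U V V'
      have hop : (nab.flip (nab U (V + V')) - nab U ∘ₗ nab.flip (V + V')
          + nab.flip (V + V') ∘ₗ (LieAlgebra.ad ℝ L U : L →ₗ[ℝ] L))
          = (nab.flip (nab U V) - nab U ∘ₗ nab.flip V
          + nab.flip V ∘ₗ (LieAlgebra.ad ℝ L U : L →ₗ[ℝ] L))
          + (nab.flip (nab U V') - nab U ∘ₗ nab.flip V'
          + nab.flip V' ∘ₗ (LieAlgebra.ad ℝ L U : L →ₗ[ℝ] L)) := by
        ext v
        simp only [LinearMap.add_apply, LinearMap.sub_apply, LinearMap.comp_apply,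
          LinearMap.flip_apply, LieAlgebra.ad_apply, map_add, LinearMap.add_apply]
        abel
      rw [hRic, hRic, hRic, hop, map_add]
    have Ricsmulr : ∀ (s : ℝ) (U V : L), Ric U (s • V) = s * Ric U V := by
      intro s U V
      have hop : (nab.flip (nab U (s • V)) - nab U ∘ₗ nab.flip (s • V)
          + nab.flip (s • V) ∘ₗ (LieAlgebra.ad ℝ L U : L →ₗ[ℝ] L))
          = s • (nab.flip (nab U V) - nab U ∘ₗ nab.flip V
          + nab.flip V ∘ₗ (LieAlgebra.ad ℝ L U : L →ₗ[ℝ] L)) := by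
        ext v
        simp only [LinearMap.add_apply, LinearMap.sub_apply, LinearMap.comp_apply,
          LinearMap.flip_apply, LieAlgebra.ad_apply, map_smul, LinearMap.smul_apply]
        module
      rw [hRic, hRic, hop, map_smul, smul_eq_mul]
    refine ⟨lam 4 ^ 4, ?_, -(lam 1 ^ 2 + lam 2 ^ 2) / (2 * (lam 4 ^ 2 * lam 4 ^ 2)), ?_⟩
    · have h44 : lam 4 ^ 4 = (lam 4 ^ 2) ^ 2 := by ring
      rw [h44]; exact pow_pos hD 2
    have hB2 : lam 2 ^ 2 = 4 * lam 4 ^ 4 / lam 1 ^ 2 := by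
      field_simp
      linear_combination hab
    have hBz : LinearMap.mk₂ ℝ (fun u w : L => Ric u w
          + (1/2) * (inn (nab u X0) w + inn u (nab w X0))
          - (1/(lam 4 ^ 4)) * (inn X0 u * inn X0 w)
          - (-(lam 1 ^ 2 + lam 2 ^ 2) / (2 * (lam 4 ^ 2 * lam 4 ^ 2))) * inn u w)
        (by intro u u' w
            simp only [Ricaddl, map_add, LinearMap.add_apply]
            ring)
        (by intro s u w
            simp only [Ricsmull, map_smul, LinearMap.smul_apply, smul_eq_mul]
            ring)
        (by intro u w w'
            simp only [Ricaddr, map_add, LinearMap.add_apply]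
            ring)
        (by intro s u w
            simp only [Ricsmulr, map_smul, LinearMap.smul_apply, smul_eq_mul]
            ring)
        = 0 := by
      apply LinearMap.ext_basis b b
      intro i j
      fin_cases i <;> fin_cases j <;>
        simp only [LinearMap.mk₂_apply, LinearMap.zero_apply,
          Fin.zero_eta, Fin.mk_one, Fin.reduceFinMk, hb0, hb1, hb2, hb3,
          R11, R12, R13, R14, R21, R22, R23, R24, R31, R32, R33, R34, R41, R42, R43, R44,
        nX1, nX2, nX3, nX4, iX1, iX2, iX3, iX4,
        i11, i12, i13, i14, i21, i22, i23, i24, i31, i32, i33, i34, i41, i42, i43, i44,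
        map_zero, map_smul, LinearMap.zero_apply, LinearMap.smul_apply, smul_eq_mul,
        LinearMap.map_smul] <;>
        (try rw [hc]) <;> (try rw [hB2]) <;> field_simp <;> try ring
    intro U W
    have hz := LinearMap.congr_fun (LinearMap.congr_fun hBz U) W
    simp only [LinearMap.mk₂_apply, LinearMap.zero_apply] at hz
    linarith
end
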